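/- Let r ∈ {2,3} and suppose ω is a 1r-path from 𝐫 to 𝟏 (every configuration along ω takes spin values only in {1,r}). Then: (a) the height of ω satisfies Φ_ω ≥ H(𝟐) + Γ*; and (b) if Φ_ω = H(𝟐) + Γ*, then ω intersects the critical set W(𝐫,𝟏). -/

import Mathlib

namespace GenPotts

/-- Spin values: `0` represents spin `1`, `1` represents spin `2`, `2` represents spin `3`. -/
abbrev Spin := Fin 3

/-- Vertices of the two-dimensional discrete torus. -/
abbrev Vtx (K L : ℕ) := ZMod K × ZMod L

/-- Spin configurations. -/
abbrev Config (K L : ℕ) := Vtx K L → Spin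

section Defs

variable (K L : ℕ)

/-- The constant configuration with all spins equal to `r`. -/
def const (r : Spin) : Config K L := fun _ => r

variable [NeZero K] [NeZero L]

/-- The number of (unordered nearest-neighbour) edges of the torus whose endpoint spins are
`i` and `j`.  Each edge is represented exactly once as a pair (vertex, direction), where the
direction `true` points right and `false` points up. -/
def nEdge (σ : Config K L) (i j : Spin) : ℕ :=
  ((Finset.univ : Finset (Vtx K L × Bool)).filter (fun p =>
    (σ p.1 = i ∧ σ (if p.2 then (p.1.1 + 1, p.1.2) else (p.1.1, p.1.2 + 1)) = j) ∨
    (σ p.1 = j ∧ σ (if p.2 then (p.1.1 + 1, p.1.2) else (p.1.1, p.1.2 + 1)) = i))).card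

/-- The number of vertices with spin `i`. -/
def nVtx (σ : Config K L) (i : Spin) : ℕ :=
  ((Finset.univ : Finset (Vtx K L)).filter (fun v => σ v = i)).card

end Defs

/-- The coupling constants of the generalized Potts model. -/
structure Couplings where
  J11 : ℝ
  J22 : ℝ
  J33 : ℝ
  J12 : ℝ
  J13 : ℝ
  J23 : ℝ

namespace Couplings

def γ1 (C : Couplings) : ℝ := C.J11 - C.J22
def γ12 (C : Couplings) : ℝ := C.J12 + C.J22
def γ23 (C : Couplings) : ℝ := C.J23 + C.J22

end Couplings

/-- The Hamiltonian of the generalized three-state Potts model. -/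
noncomputable def H (K L : ℕ) [NeZero K] [NeZero L] (C : Couplings) (σ : Config K L) : ℝ :=
  -(C.J11 * nEdge K L σ 0 0 + C.J22 * nEdge K L σ 1 1 + C.J33 * nEdge K L σ 2 2)
    + C.J12 * nEdge K L σ 0 1 + C.J13 * nEdge K L σ 0 2 + C.J23 * nEdge K L σ 1 2

/-- The auxiliary function `f_h`. -/
noncomputable def fh (h x : ℝ) : ℝ :=
  4 * (x + h / 2) * (⌈(x + h / 2) / h⌉ : ℝ)
    - 2 * h * ((⌈(x + h / 2) / h⌉ : ℝ) ^ 2 - (⌈(x + h / 2) / h⌉ : ℝ) + 1)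

/-- The critical length `ℓ*`. -/
noncomputable def lstar (C : Couplings) : ℕ := ⌈(2 * C.γ12 + C.γ1) / (2 * C.γ1)⌉₊

/-- The critical energy barrier `Γ*`. -/
noncomputable def Γstar (C : Couplings) : ℝ := fh C.γ1 C.γ12

/-- The standing assumptions on the lattice sizes and the coupling constants. -/
structure Admissible (K L : ℕ) (C : Couplings) : Prop where
  hKL : K ≤ L
  hK : 2 * lstar C ^ 2 ≤ K
  pos11 : 0 < C.J11
  pos22 : 0 < C.J22
  pos33 : 0 < C.J33
  pos12 : 0 < C.J12
  pos13 : 0 < C.J13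
  pos23 : 0 < C.J23
  h1122 : C.J22 < C.J11
  h2233 : C.J22 = C.J33
  h1213 : C.J12 = C.J13
  hA : ∀ n : ℤ, (2 * C.γ12 + C.γ1) / (2 * C.γ1) ≠ (n : ℝ)
  hB : fh C.γ1 C.γ12 = 2 * (K + 1) * C.γ23
  hC : 4 * C.γ23 + C.γ1 ≤ 2 * C.γ12

section Paths

variable (K L : ℕ) [NeZero K] [NeZero L]

/-- Two configurations differ at exactly one vertex. -/
def SingleFlip (σ σ' : Config K L) : Prop :=
  ∃ v, σ v ≠ σ' v ∧ ∀ w, w ≠ v → σ w = σ' w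

/-- A path: a finite sequence of configurations in which consecutive configurations differ
at exactly one vertex. -/
structure Path where
  len : ℕ
  toFun : ℕ → Config K L
  step : ∀ n, n < len → SingleFlip K L (toFun n) (toFun (n + 1))

/-- The height of a path: the maximum of `H` along it. -/
noncomputable def Path.height {K L : ℕ} [NeZero K] [NeZero L] (ω : Path K L)
    (C : Couplings) : ℝ :=
  Finset.sup' (Finset.range (ω.len + 1))
    (Finset.nonempty_range_iff.mpr (Nat.succ_ne_zero _))
    (fun n => H K L C (ω.toFun n))

/-- The path goes from `σ` to `σ'`. -/
def Path.FromTo {K L : ℕ} [NeZero K] [NeZero L] (ω : Path K L)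
    (σ σ' : Config K L) : Prop :=
  ω.toFun 0 = σ ∧ ω.toFun ω.len = σ'

/-- A path is an `ij`-path if every configuration along it has all spins in `{i, j}`. -/
def Path.OnlySpins {K L : ℕ} [NeZero K] [NeZero L] (ω : Path K L) (i j : Spin) : Prop :=
  ∀ n ≤ ω.len, ∀ v, ω.toFun n v = i ∨ ω.toFun n v = j

/-- The communication height `Φ(σ, σ')`: the minimal height over paths from `σ` to `σ'`. -/
noncomputable def Phi (C : Couplings) (σ σ' : Config K L) : ℝ :=
  sInf {x | ∃ ω : Path K L, ω.FromTo σ σ' ∧ ω.height C = x}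

/-- The communication height `Φ(σ, A)` between `σ` and a set `A`. -/
noncomputable def PhiSet (C : Couplings) (σ : Config K L) (A : Set (Config K L)) : ℝ :=
  sInf {x | ∃ ω : Path K L, ω.toFun 0 = σ ∧ ω.toFun ω.len ∈ A ∧ ω.height C = x}

/-- The energy barrier `Γ(σ, σ') = Φ(σ, σ') − H(σ)`. -/
noncomputable def Gamma (C : Couplings) (σ σ' : Config K L) : ℝ :=
  Phi K L C σ σ' - H K L C σ

/-- The stability level `V_σ = Φ(σ, I_σ) − H(σ)` where `I_σ = {η : H(η) < H(σ)}`. -/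
noncomputable def stabLevel (C : Couplings) (σ : Config K L) : ℝ :=
  PhiSet K L C σ {η | H K L C η < H K L C σ} - H K L C σ

/-- The set `X^s` of global minimizers of `H`. -/
def Xs (C : Couplings) : Set (Config K L) :=
  {σ | ∀ η, H K L C σ ≤ H K L C η}

/-- The set `X^m` of metastable configurations. -/
noncomputable def Xm (C : Couplings) : Set (Config K L) :=
  {η | η ∉ Xs K L C ∧
    stabLevel K L C η = sSup {x | ∃ σ, σ ∉ Xs K L C ∧ stabLevel K L C σ = x}}

/-- The projection operator `P^{rs}` replacing every spin `r` by `s`. -/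
def proj (r s : Spin) (σ : Config K L) : Config K L :=
  fun v => if σ v = r then s else σ v

/-- The initial cycle `C_r = {σ : Φ(𝐫, σ) < H(𝟐) + Γ*}`. -/
noncomputable def initCycle (C : Couplings) (r : Spin) : Set (Config K L) :=
  {σ | Phi K L C (const K L r) σ < H K L C (const K L 1) + Γstar C}

/-- An optimal path from `σ` to `σ'`: a path whose height equals `Φ(σ, σ')`. -/
noncomputable def OptPath (C : Couplings) (σ σ' : Config K L) (ω : Path K L) : Prop :=
  ω.FromTo σ σ' ∧ ω.height C = Phi K L C σ σ'

/-- The configurations at which `H` attains its maximum along a path. -/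
noncomputable def pathArgmax (C : Couplings) (ω : Path K L) : Set (Config K L) :=
  {ξ | (∃ n ≤ ω.len, ω.toFun n = ξ) ∧ H K L C ξ = ω.height C}

/-- The set of minimal saddles `S(σ, σ')`. -/
noncomputable def Saddles (C : Couplings) (σ σ' : Config K L) : Set (Config K L) :=
  {ξ | ∃ ω : Path K L, OptPath K L C σ σ' ω ∧ ξ ∈ pathArgmax K L C ω}

/-- `W` is a gate for the transition `σ → σ'`. -/
noncomputable def IsGate (C : Couplings) (σ σ' : Config K L) (W : Set (Config K L)) : Prop :=
  W ⊆ Saddles K L C σ σ' ∧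
    ∀ ω : Path K L, OptPath K L C σ σ' ω → ∃ n ≤ ω.len, ω.toFun n ∈ W

/-- `W` is a minimal gate for the transition `σ → σ'`. -/
noncomputable def IsMinimalGate (C : Couplings) (σ σ' : Config K L)
    (W : Set (Config K L)) : Prop :=
  IsGate K L C σ σ' W ∧
    ∀ W', W' ⊂ W → ∃ ω : Path K L, OptPath K L C σ σ' ω ∧ ∀ n ≤ ω.len, ω.toFun n ∉ W'

/-- `G(σ, σ')`: the union of all minimal gates for the transition `σ → σ'`. -/
noncomputable def gateUnion (C : Couplings) (σ σ' : Config K L) : Set (Config K L) :=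
  {ξ | ∃ W, IsMinimalGate K L C σ σ' W ∧ ξ ∈ W}

end Paths

section Geometry

variable (K L : ℕ)

/-- The `a × b` rectangle (`a` columns, `b` rows) with lower-left corner `(x0, y0)`. -/
def rectSet (x0 : ZMod K) (y0 : ZMod L) (a b : ℕ) : Set (Vtx K L) :=
  {v | ∃ i j : ℕ, i < a ∧ j < b ∧ v = (x0 + (i : ZMod K), y0 + (j : ZMod L))}

/-- A vertical bar of `l` consecutive cells in column `x` starting at row `y0`. -/
def barV (x : ZMod K) (y0 : ZMod L) (l : ℕ) : Set (Vtx K L) :=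
  {v | ∃ j : ℕ, j < l ∧ v = (x, y0 + (j : ZMod L))}

/-- A horizontal bar of `l` consecutive cells in row `y` starting at column `x0`. -/
def barH (x0 : ZMod K) (y : ZMod L) (l : ℕ) : Set (Vtx K L) :=
  {v | ∃ i : ℕ, i < l ∧ v = (x0 + (i : ZMod K), y)}

/-- The configuration with spin `s` exactly on the set `A` and spin `r` elsewhere. -/
noncomputable def onSet (A : Set (Vtx K L)) (r s : Spin) : Config K L :=
  fun v => @ite _ (v ∈ A) (Classical.dec _) s r

/-- `R_{a,b}(r,s)`: configurations equal to `r` everywhere except for spins `s` on an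
`a × b` rectangle. -/
noncomputable def Rconf (a b : ℕ) (r s : Spin) : Set (Config K L) :=
  {σ | ∃ x0 y0, σ = onSet K L (rectSet K L x0 y0 a b) r s}

/-- `B^l_{a,b}(r,s)`: configurations equal to `r` everywhere except for spins `s` on an
`a × b` rectangle together with a bar of `l` consecutive cells attached to one of the
(vertical) sides of length `b`. -/
noncomputable def Bconf (a b l : ℕ) (r s : Spin) : Set (Config K L) :=
  {σ | ∃ (x0 : ZMod K) (y0 : ZMod L) (x : ZMod K) (j0 : ℕ),
      (x = x0 - 1 ∨ x = x0 + (a : ZMod K)) ∧ j0 + l ≤ b ∧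
      σ = onSet K L (rectSet K L x0 y0 a b ∪ barV K L x (y0 + (j0 : ZMod L)) l) r s}

/-- `B̂^l_{a,b}(r,s)`: as `B^l_{a,b}(r,s)` but with the bar attached to one of the
(horizontal) sides of length `a`. -/
noncomputable def Bhat (a b l : ℕ) (r s : Spin) : Set (Config K L) :=
  {σ | ∃ (x0 : ZMod K) (y0 : ZMod L) (y : ZMod L) (i0 : ℕ),
      (y = y0 - 1 ∨ y = y0 + (b : ZMod L)) ∧ i0 + l ≤ a ∧
      σ = onSet K L (rectSet K L x0 y0 a b ∪ barH K L (x0 + (i0 : ZMod K)) y l) r s}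

/-- The critical set `W(𝐦, 𝟏) = B^1_{ℓ*−1,ℓ*}(m,1) ∪ B̂^1_{ℓ*,ℓ*−1}(m,1)`. -/
noncomputable def Wcrit (C : Couplings) (m : Spin) : Set (Config K L) :=
  Bconf K L (lstar C - 1) (lstar C) 1 m 0 ∪ Bhat K L (lstar C) (lstar C - 1) 1 m 0

/-- The set `W'(𝐦, 𝟏) = B̂^1_{ℓ*−1,ℓ*}(m,1) ∪ B^1_{ℓ*,ℓ*−1}(m,1)`. -/
noncomputable def Wcrit' (C : Couplings) (m : Spin) : Set (Config K L) :=
  Bhat K L (lstar C - 1) (lstar C) 1 m 0 ∪ Bconf K L (lstar C) (lstar C - 1) 1 m 0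

/-- The set `𝒫(𝐫, 𝐬)`. -/
noncomputable def Pgate (r s : Spin) : Set (Config K L) :=
  Bconf K L 1 K (K - 1) r s ∪ (if K = L then Bhat K L K 1 (K - 1) r s else ∅)

/-- The set `𝒬(𝐫, 𝐬)`. -/
noncomputable def Qgate (r s : Spin) : Set (Config K L) :=
  Rconf K L 2 (K - 1) r s ∪ Bconf K L 1 K (K - 2) r s ∪
    (if K = L then Rconf K L (K - 1) 2 r s ∪ Bhat K L K 1 (K - 2) r s else ∅)

/-- The set `ℋ_i(𝐫, 𝐬)`. -/
noncomputable def Hgate (i : ℕ) (r s : Spin) : Set (Config K L) :=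
  Bconf K L 1 K i r s ∪ (⋃ j ∈ Finset.Icc (i + 1) (K - 2), Bconf K L 1 (K - 1) j r s) ∪
    (if K = L then
      Bhat K L K 1 i r s ∪ ⋃ j ∈ Finset.Icc (i + 1) (K - 2), Bhat K L (K - 1) 1 j r s
    else ∅)

/-- The set `𝒲^h_j(𝐫, 𝐬)`. -/
noncomputable def Wgate (j h : ℕ) (r s : Spin) : Set (Config K L) :=
  Bconf K L j K h r s ∪ (if K = L then Bhat K L K j h r s else ∅)

/-- The admissible gate collection for the transition between `𝟐` and `𝟑`. -/
noncomputable def gateCollection : Set (Set (Config K L)) :=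
  {A | (∃ j h, 2 ≤ j ∧ j ≤ L - 3 ∧ 1 ≤ h ∧ h ≤ K - 1 ∧ A = Wgate K L j h 1 2)
    ∨ A = Qgate K L 1 2 ∨ A = Pgate K L 1 2 ∨ A = Pgate K L 2 1 ∨ A = Qgate K L 2 1
    ∨ (∃ i, 1 ≤ i ∧ i ≤ K - 3 ∧ A = Hgate K L i 1 2)
    ∨ (∃ i, 1 ≤ i ∧ i ≤ K - 3 ∧ A = Hgate K L i 2 1)}

/-- The union `𝒲(𝟐, 𝟑)` of all the plateau gates between `𝟐` and `𝟑`. -/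
noncomputable def W23 : Set (Config K L) :=
  (⋃ i ∈ Finset.Icc 1 (K - 3), Hgate K L i 1 2) ∪ Qgate K L 1 2 ∪ Pgate K L 1 2 ∪
    (⋃ j ∈ Finset.Icc 2 (L - 3), ⋃ h ∈ Finset.Icc 1 (K - 1), Wgate K L j h 1 2) ∪
    Pgate K L 2 1 ∪ Qgate K L 2 1 ∪ (⋃ i ∈ Finset.Icc 1 (K - 3), Hgate K L i 2 1)

/-- Nearest-neighbour adjacency on the torus. -/
def Adj (v w : Vtx K L) : Prop :=
  w = (v.1 + 1, v.2) ∨ w = (v.1 - 1, v.2) ∨ w = (v.1, v.2 + 1) ∨ w = (v.1, v.2 - 1)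

/-- An `r`-cluster of `σ`: a maximal connected set of vertices all having spin `r`. -/
def IsCluster (σ : Config K L) (r : Spin) (A : Set (Vtx K L)) : Prop :=
  A.Nonempty ∧ (∀ v ∈ A, σ v = r) ∧
    (∀ v ∈ A, ∀ w ∈ A,
      Relation.ReflTransGen (fun a b => a ∈ A ∧ b ∈ A ∧ Adj K L a b) v w) ∧
    (∀ v ∈ A, ∀ w, Adj K L v w → σ w = r → w ∈ A)

/-- A set of vertices is a rectangle: the product of a set of consecutive columns and a set
of consecutive rows of the torus. -/
def IsRectangle (A : Set (Vtx K L)) : Prop :=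
  ∃ (x0 : ZMod K) (y0 : ZMod L) (a b : ℕ), a ≤ K ∧ b ≤ L ∧ A = rectSet K L x0 y0 a b

end Geometry

section LocalMin

variable (K L : ℕ) [NeZero K] [NeZero L]

/-- The set `M` of strict local minima of `H`. -/
noncomputable def Mset (C : Couplings) : Set (Config K L) :=
  {σ | ∀ σ', SingleFlip K L σ σ' → H K L C σ < H K L C σ'}

/-- A stable plateau: a nonempty set of configurations of constant energy, connected under
single spin flips, such that every configuration outside it reachable by a single spin flip
has strictly larger energy. -/
noncomputable def IsStablePlateau (C : Couplings) (D : Set (Config K L)) : Prop :=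
  D.Nonempty ∧ (∃ c, ∀ σ ∈ D, H K L C σ = c) ∧
    (∀ σ ∈ D, ∀ η ∈ D,
      Relation.ReflTransGen (fun a b => a ∈ D ∧ b ∈ D ∧ SingleFlip K L a b) σ η) ∧
    (∀ σ ∈ D, ∀ σ', SingleFlip K L σ σ' → σ' ∉ D → H K L C σ < H K L C σ')

/-- The union `M̄` of all stable plateaux. -/
noncomputable def Mbar (C : Couplings) : Set (Config K L) :=
  {σ | ∃ D, IsStablePlateau K L C D ∧ σ ∈ D}

end LocalMin

namespace Aux
open Finset
set_option linter.unusedSectionVars false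

variable {M : ℕ} [NeZero M]

/-- an arc (cyclic interval) of length `m` starting at `a`. -/
def arc (a : ZMod M) (m : ℕ) : Finset (ZMod M) :=
  (Finset.range m).image (fun i : ℕ => a + (i : ZMod M))

lemma mem_arc {a z : ZMod M} {m : ℕ} : z ∈ arc a m ↔ ∃ i, i < m ∧ z = a + (i : ZMod M) := by
  simp [arc, eq_comm]

lemma natCast_inj_of_lt {i j : ℕ} (hi : i < M) (hj : j < M) (h : (i : ZMod M) = j) : i = j := by
  have := congrArg ZMod.val h
  rwa [ZMod.val_natCast_of_lt hi, ZMod.val_natCast_of_lt hj] at this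

lemma card_arc (a : ZMod M) {m : ℕ} (hm : m ≤ M) : (arc a m).card = m := by
  rw [arc, Finset.card_image_of_injOn, Finset.card_range]
  intro i hi j hj hij
  simp only [coe_range, Set.mem_Iio] at hi hj
  exact natCast_inj_of_lt (lt_of_lt_of_le hi hm) (lt_of_lt_of_le hj hm) (by
    exact add_left_cancel hij)

/-- number of boundary transitions of `S` around the cycle. -/
def tcount (S : Finset (ZMod M)) : ℕ :=
  (univ.filter fun z => (z ∈ S ∧ z + 1 ∉ S) ∨ (z ∉ S ∧ z + 1 ∈ S)).card

def ups (S : Finset (ZMod M)) : Finset (ZMod M) := univ.filter fun z => z ∈ S ∧ z + 1 ∉ S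
def downs (S : Finset (ZMod M)) : Finset (ZMod M) := univ.filter fun z => z ∉ S ∧ z + 1 ∈ S

lemma tcount_eq (S : Finset (ZMod M)) : tcount S = (ups S).card + (downs S).card := by
  rw [tcount, Finset.filter_or, Finset.card_union_of_disjoint]
  · rfl
  · rw [Finset.disjoint_filter]
    tauto

lemma card_ups_eq_card_downs (S : Finset (ZMod M)) : (ups S).card = (downs S).card := by
  have key : ∀ T : Finset (ZMod M),
      (univ.filter fun z : ZMod M => z + 1 ∈ T).card = T.card := by
    intro T
    apply Finset.card_bij (fun z _ => z + 1)
    · intro a ha; simpa using (Finset.mem_filter.mp ha).2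
    · intro a _ b _ h; exact add_right_cancel h
    · intro b hb; exact ⟨b - 1, by simp [hb], by ring⟩
  have h1 : (ups S).card + (univ.filter fun z : ZMod M => z ∈ S ∧ z + 1 ∈ S).card = S.card := by
    rw [ups, ← Finset.card_union_of_disjoint, ← Finset.filter_or]
    · have : (univ.filter fun z : ZMod M => (z ∈ S ∧ z + 1 ∉ S) ∨ (z ∈ S ∧ z + 1 ∈ S)) = S := by
        ext z; by_cases h : z + 1 ∈ S <;> simp [h]
      rw [this]
    · rw [Finset.disjoint_filter]; tauto
  have h2 : (downs S).card + (univ.filter fun z : ZMod M => z ∈ S ∧ z + 1 ∈ S).card = S.card := by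
    rw [downs, ← Finset.card_union_of_disjoint, ← Finset.filter_or]
    · rw [← key S]; congr 1; ext z; by_cases h : z ∈ S <;> simp [h]
    · rw [Finset.disjoint_filter]; tauto
  omega

lemma natCast_add_closed {S : Finset (ZMod M)} (h : ∀ z ∈ S, z + 1 ∈ S) {a : ZMod M}
    (ha : a ∈ S) : ∀ n : ℕ, a + (n : ZMod M) ∈ S := by
  intro n
  induction n with
  | zero => simpa using ha
  | succ n ih => have := h _ ih; push_cast; rw [← add_assoc] at *; exact_mod_cast this

lemma exists_down {S : Finset (ZMod M)} (hne : S.Nonempty) (hproper : S ≠ univ) :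
    ∃ z, z ∉ S ∧ z + 1 ∈ S := by
  by_contra hcon
  push_neg at hcon
  -- complement is closed under +1
  obtain ⟨a, ha⟩ := hne
  obtain ⟨b, hb⟩ : ∃ b, b ∉ S := by
    by_contra h; push_neg at h; exact hproper (Finset.eq_univ_iff_forall.mpr h)
  have hcc : ∀ z, z ∉ S → z + 1 ∉ S := fun z hz h1 => hz (by
    by_contra _
    exact absurd (hcon z (by assumption)) (by simp [h1]))
  -- show a ∉ S via a = b + k
  have : ∀ n : ℕ, b + (n : ZMod M) ∉ S := by
    intro n
    induction n with
    | zero => simpa using hb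
    | succ n ih =>
      have := hcc _ ih; push_cast; rw [← add_assoc] at *; exact_mod_cast this
  have hval : b + ((a - b).val : ZMod M) = a := by
    rw [ZMod.natCast_val, ZMod.cast_id]; ring
  exact this (a - b).val (by rw [hval]; exact ha)

lemma two_le_tcount {S : Finset (ZMod M)} (hne : S.Nonempty) (hproper : S ≠ univ) :
    2 ≤ tcount S := by
  obtain ⟨z, hz, hz1⟩ := exists_down hne hproper
  have h1 : 1 ≤ (downs S).card := Finset.card_pos.mpr ⟨z, by simp [downs, hz, hz1]⟩
  rw [tcount_eq, card_ups_eq_card_downs]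
  omega

lemma tcount_even (S : Finset (ZMod M)) : Even (tcount S) := by
  rw [tcount_eq, card_ups_eq_card_downs]
  exact ⟨_, rfl⟩

lemma tcount_empty : tcount (∅ : Finset (ZMod M)) = 0 := by
  simp [tcount]


set_option maxHeartbeats 1000000

lemma tcount_ne_univ {S : Finset (ZMod M)} (h : S = univ) : tcount S = 0 := by
  subst h; simp [tcount]

lemma tcount_pos_nonempty {S : Finset (ZMod M)} (h : 0 < tcount S) : S.Nonempty := by
  rcases Finset.eq_empty_or_nonempty S with rfl | hne
  · simp [tcount] at h
  · exact hne

lemma tcount_pos_proper {S : Finset (ZMod M)} (h : 0 < tcount S) : S ≠ univ := by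
  intro hu; rw [tcount_ne_univ hu] at h; omega

lemma eq_arc_of_tcount_eq_two {S : Finset (ZMod M)} (h2 : tcount S = 2) :
    ∃ a, S = arc a S.card := by
  have hne : S.Nonempty := tcount_pos_nonempty (by omega)
  have hproper : S ≠ univ := tcount_pos_proper (by omega)
  have hdowns : (downs S).card = 1 := by
    have := tcount_eq S; have := card_ups_eq_card_downs S; omega
  obtain ⟨a, hamem⟩ := Finset.card_eq_one.mp hdowns
  have haS : a ∉ S ∧ a + 1 ∈ S := by
    have : a ∈ downs S := by rw [hamem]; exact Finset.mem_singleton_self a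
    simpa [downs] using this
  have huniq : ∀ z : ZMod M, z ∉ S → z + 1 ∈ S → z = a := by
    intro z hz hz1
    have : z ∈ downs S := by simp [downs, hz, hz1]
    rw [hamem] at this; simpa using this
  have hM1 : 1 ≤ M := Nat.one_le_iff_ne_zero.mpr (NeZero.ne M)
  -- down-closedness of index set
  have key : ∀ i : ℕ, i < M → (a + 1 + (i : ZMod M) ∈ S) → ∀ j, j ≤ i →
      a + 1 + (j : ZMod M) ∈ S := by
    intro i
    induction i with
    | zero =>
      intro _ hmem j hj
      interval_cases j
      exact hmem
    | succ n ih =>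
      intro hlt hmem j hj
      have hn : a + 1 + (n : ZMod M) ∈ S := by
        by_contra hno
        have heq : a + 1 + (n : ZMod M) = a := by
          apply huniq _ hno
          have : a + 1 + ((n : ZMod M) + 1) = a + 1 + ((n + 1 : ℕ) : ZMod M) := by push_cast; ring
          rw [← add_assoc] at this
          rw [this]; exact hmem
        have : ((n + 1 : ℕ) : ZMod M) = 0 := by
          have := congrArg (fun t => t - a) heq
          simpa [add_assoc, add_comm, add_sub_cancel_left, sub_self] using by
            push_cast at this ⊢; linear_combination this
        have := (ZMod.natCast_eq_zero_iff (n+1) M).mp this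
        have := Nat.le_of_dvd (by omega) this
        omega
      rcases Nat.eq_or_lt_of_le hj with rfl | hjn
      · exact hmem
      · exact ih (by omega) hn j (by omega)
  -- the index set T
  classical
  set T : Finset ℕ := (Finset.range M).filter (fun i => a + 1 + (i : ZMod M) ∈ S) with hT
  have hTcard : T.card = S.card := by
    have himg : T.image (fun i : ℕ => a + 1 + (i : ZMod M)) = S := by
      apply Finset.Subset.antisymm
      · intro z hz
        simp only [Finset.mem_image] at hz
        obtain ⟨i, hi, rfl⟩ := hz
        exact (Finset.mem_filter.mp hi).2
      · intro s hs
        have hval : a + 1 + (((s - (a+1)).val : ℕ) : ZMod M) = s := by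
          rw [ZMod.natCast_val, ZMod.cast_id]; ring
        refine Finset.mem_image.mpr ⟨(s - (a+1)).val, ?_, hval⟩
        refine Finset.mem_filter.mpr ⟨Finset.mem_range.mpr (ZMod.val_lt _), ?_⟩
        rw [hval]; exact hs
    have hinj : Set.InjOn (fun i : ℕ => a + 1 + (i : ZMod M)) ↑T := by
      intro i hi j hj hij
      simp only [hT, coe_filter, Set.mem_setOf_eq, Finset.mem_range] at hi hj
      exact natCast_inj_of_lt hi.1 hj.1 (add_left_cancel hij)
    rw [← himg, Finset.card_image_of_injOn hinj]
  have hTdc : ∀ i ∈ T, ∀ j ≤ i, j ∈ T := by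
    intro i hi j hj
    have hi' := Finset.mem_filter.mp hi
    exact Finset.mem_filter.mpr ⟨Finset.mem_range.mpr (by
      have := Finset.mem_range.mp hi'.1; omega), key i (Finset.mem_range.mp hi'.1) hi'.2 j hj⟩
  have hTne : T.Nonempty := by
    rw [← Finset.card_pos, hTcard, Finset.card_pos]; exact hne
  have hbmem := Finset.max'_mem T hTne
  have hTr : T = Finset.range (T.max' hTne + 1) := by
    apply Finset.Subset.antisymm
    · intro i hi; exact Finset.mem_range.mpr (Nat.lt_succ_of_le (Finset.le_max' T i hi))
    · intro j hj; exact hTdc _ hbmem j (Nat.lt_succ_iff.mp (Finset.mem_range.mp hj))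
  have hc : T.max' hTne + 1 = S.card := by
    have h' := congrArg Finset.card hTr
    rw [Finset.card_range] at h'
    omega
  refine ⟨a + 1, ?_⟩
  have : S = T.image (fun i : ℕ => a + 1 + (i : ZMod M)) := by
    -- reuse from above... recompute
    apply Finset.Subset.antisymm
    · intro s hs
      have hval : a + 1 + (((s - (a+1)).val : ℕ) : ZMod M) = s := by
        rw [ZMod.natCast_val, ZMod.cast_id]; ring
      refine Finset.mem_image.mpr ⟨(s - (a+1)).val, ?_, hval⟩
      refine Finset.mem_filter.mpr ⟨Finset.mem_range.mpr (ZMod.val_lt _), ?_⟩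
      rw [hval]; exact hs
    · intro z hz
      simp only [Finset.mem_image] at hz
      obtain ⟨i, hi, rfl⟩ := hz
      exact (Finset.mem_filter.mp hi).2
  have harc : arc (a + 1) S.card = T.image (fun i : ℕ => a + 1 + (i : ZMod M)) := by
    rw [arc, ← hc, ← hTr]
  rw [harc]
  exact this

lemma exit_of_arc {a : ZMod M} {m : ℕ} (hm1 : 1 ≤ m) (hmM : m < M) {z : ZMod M}
    (hz : z ∈ arc a m) (hz1 : z + 1 ∉ arc a m) : z = a + ((m - 1 : ℕ) : ZMod M) := by
  obtain ⟨i, hi, rfl⟩ := mem_arc.mp hz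
  have : i = m - 1 := by
    by_contra hne
    have him : i + 1 < m := by omega
    exact hz1 (mem_arc.mpr ⟨i + 1, him, by push_cast; ring⟩)
  subst this; rfl

lemma arc_extend {a b : ZMod M} {m : ℕ} (hm1 : 1 ≤ m) (hmM : m + 1 < M) {t : ZMod M}
    (ht : t ∉ arc a m) (harc : insert t (arc a m) = arc b (m + 1)) :
    t = a - 1 ∨ t = a + (m : ZMod M) := by
  by_contra hcon
  push_neg at hcon
  obtain ⟨ht1, ht2⟩ := hcon
  have hM2 : 2 ≤ M := by omega
  -- t is an exit of arc b (m+1)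
  have htmem : t ∈ arc b (m + 1) := by rw [← harc]; exact Finset.mem_insert_self _ _
  have htnot : t + 1 ∉ arc b (m + 1) := by
    rw [← harc]
    intro hmem
    rcases Finset.mem_insert.mp hmem with heq | hmem'
    · have : (1 : ZMod M) = 0 := by linear_combination heq
      have := natCast_inj_of_lt (show 1 < M by omega) (show 0 < M by omega) (by exact_mod_cast this)
      omega
    · obtain ⟨i, hi, hieq⟩ := mem_arc.mp hmem'
      rcases Nat.eq_zero_or_pos i with rfl | hipos
      · exact ht1 (by push_cast at hieq; linear_combination hieq)
      · exact ht (mem_arc.mpr ⟨i - 1, by omega, by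
          have : ((i : ℕ) : ZMod M) = ((i - 1 : ℕ) : ZMod M) + 1 := by
            have : i - 1 + 1 = i := by omega
            conv_lhs => rw [← this]
            push_cast; ring
          rw [this] at hieq
          linear_combination hieq⟩)
  have hexit1 : t = b + ((m + 1 - 1 : ℕ) : ZMod M) := exit_of_arc (by omega) hmM htmem htnot
  -- a + (m-1) is also an exit
  have hx : a + ((m - 1 : ℕ) : ZMod M) ∈ arc b (m+1) := by
    rw [← harc]
    exact Finset.mem_insert_of_mem (mem_arc.mpr ⟨m - 1, by omega, rfl⟩)
  have hxsucc : a + ((m - 1 : ℕ) : ZMod M) + 1 = a + (m : ZMod M) := by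
    have : m - 1 + 1 = m := by omega
    conv_rhs => rw [← this]
    push_cast; ring
  have hxnot : a + ((m - 1 : ℕ) : ZMod M) + 1 ∉ arc b (m+1) := by
    rw [hxsucc, ← harc]
    intro hmem
    rcases Finset.mem_insert.mp hmem with heq | hmem'
    · exact ht2 heq.symm
    · obtain ⟨i, hi, hieq⟩ := mem_arc.mp hmem'
      have : (m : ZMod M) = (i : ZMod M) := by linear_combination hieq
      have := natCast_inj_of_lt (by omega) (by omega) this
      omega
  have hexit2 : a + ((m - 1 : ℕ) : ZMod M) = b + ((m + 1 - 1 : ℕ) : ZMod M) :=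
    exit_of_arc (by omega) hmM hx hxnot
  rw [← hexit2] at hexit1
  rw [hexit1] at ht
  exact ht (mem_arc.mpr ⟨m - 1, by omega, rfl⟩)



-- ## Section 2 : torus geometry
section Geo
variable {K L : ℕ} [NeZero K] [NeZero L]

def colSet (A : Finset (ZMod K × ZMod L)) (x : ZMod K) : Finset (ZMod L) :=
  univ.filter fun y => (x, y) ∈ A
def rowSet (A : Finset (ZMod K × ZMod L)) (y : ZMod L) : Finset (ZMod K) :=
  univ.filter fun x => (x, y) ∈ A
def perim (A : Finset (ZMod K × ZMod L)) : ℕ :=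
  (∑ x : ZMod K, tcount (colSet A x)) + ∑ y : ZMod L, tcount (rowSet A y)
def occC (A : Finset (ZMod K × ZMod L)) : Finset (ZMod K) := A.image Prod.fst
def occR (A : Finset (ZMod K × ZMod L)) : Finset (ZMod L) := A.image Prod.snd

lemma mem_colSet {A : Finset (ZMod K × ZMod L)} {x : ZMod K} {y : ZMod L} :
    y ∈ colSet A x ↔ (x, y) ∈ A := by simp [colSet]
lemma mem_rowSet {A : Finset (ZMod K × ZMod L)} {x : ZMod K} {y : ZMod L} :
    x ∈ rowSet A y ↔ (x, y) ∈ A := by simp [rowSet]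

lemma colSet_subset_occR (A : Finset (ZMod K × ZMod L)) (x : ZMod K) :
    colSet A x ⊆ occR A := by
  intro y hy; exact Finset.mem_image.mpr ⟨(x,y), mem_colSet.mp hy, rfl⟩
lemma rowSet_subset_occC (A : Finset (ZMod K × ZMod L)) (y : ZMod L) :
    rowSet A y ⊆ occC A := by
  intro x hx; exact Finset.mem_image.mpr ⟨(x,y), mem_rowSet.mp hx, rfl⟩

lemma colSet_nonempty {A : Finset (ZMod K × ZMod L)} {x : ZMod K} (hx : x ∈ occC A) :
    (colSet A x).Nonempty := by
  obtain ⟨v, hv, rfl⟩ := Finset.mem_image.mp hx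
  exact ⟨v.2, mem_colSet.mpr hv⟩
lemma rowSet_nonempty {A : Finset (ZMod K × ZMod L)} {y : ZMod L} (hy : y ∈ occR A) :
    (rowSet A y).Nonempty := by
  obtain ⟨v, hv, rfl⟩ := Finset.mem_image.mp hy
  exact ⟨v.1, mem_rowSet.mpr hv⟩

lemma colSet_empty {A : Finset (ZMod K × ZMod L)} {x : ZMod K} (hx : x ∉ occC A) :
    colSet A x = ∅ := by
  rw [Finset.eq_empty_iff_forall_notMem]
  intro y hy
  exact hx (Finset.mem_image.mpr ⟨(x,y), mem_colSet.mp hy, rfl⟩)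
lemma rowSet_empty {A : Finset (ZMod K × ZMod L)} {y : ZMod L} (hy : y ∉ occR A) :
    rowSet A y = ∅ := by
  rw [Finset.eq_empty_iff_forall_notMem]
  intro x hx
  exact hy (Finset.mem_image.mpr ⟨(x,y), mem_rowSet.mp hx, rfl⟩)

lemma sum_col_ge (A : Finset (ZMod K × ZMod L)) (hR : (occR A).card < L) :
    2 * (occC A).card ≤ ∑ x : ZMod K, tcount (colSet A x) := by
  calc 2 * (occC A).card = ∑ _x ∈ occC A, 2 := by rw [Finset.sum_const]; ring
  _ ≤ ∑ x ∈ occC A, tcount (colSet A x) := by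
      apply Finset.sum_le_sum
      intro x hx
      apply two_le_tcount (colSet_nonempty hx)
      intro hU
      have := Finset.card_le_card (colSet_subset_occR A x)
      rw [hU] at this
      simp only [Finset.card_univ, ZMod.card] at this
      omega
  _ ≤ ∑ x : ZMod K, tcount (colSet A x) :=
      Finset.sum_le_sum_of_subset_of_nonneg (Finset.subset_univ _) (by intros; positivity)

lemma sum_row_ge (A : Finset (ZMod K × ZMod L)) (hC : (occC A).card < K) :
    2 * (occR A).card ≤ ∑ y : ZMod L, tcount (rowSet A y) := by
  calc 2 * (occR A).card = ∑ _y ∈ occR A, 2 := by rw [Finset.sum_const]; ring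
  _ ≤ ∑ y ∈ occR A, tcount (rowSet A y) := by
      apply Finset.sum_le_sum
      intro y hy
      apply two_le_tcount (rowSet_nonempty hy)
      intro hU
      have := Finset.card_le_card (rowSet_subset_occC A y)
      rw [hU] at this
      simp only [Finset.card_univ, ZMod.card] at this
      omega
  _ ≤ ∑ y : ZMod L, tcount (rowSet A y) :=
      Finset.sum_le_sum_of_subset_of_nonneg (Finset.subset_univ _) (by intros; positivity)

lemma perim_ge (A : Finset (ZMod K × ZMod L)) (hC : (occC A).card < K)
    (hR : (occR A).card < L) :
    2 * ((occC A).card + (occR A).card) ≤ perim A := by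
  have h1 := sum_col_ge A hR
  have h2 := sum_row_ge A hC
  rw [perim]; omega

lemma perim_even (A : Finset (ZMod K × ZMod L)) : Even (perim A) := by
  rw [perim]
  apply Even.add <;> · apply Finset.even_sum; intro i _; exact tcount_even _

lemma card_le_occ_mul (A : Finset (ZMod K × ZMod L)) :
    A.card ≤ (occC A).card * (occR A).card := by
  rw [← Finset.card_product]
  apply Finset.card_le_card
  intro v hv
  exact Finset.mem_product.mpr ⟨Finset.mem_image.mpr ⟨v, hv, rfl⟩, Finset.mem_image.mpr ⟨v, hv, rfl⟩⟩

lemma subset_occ_prod (A : Finset (ZMod K × ZMod L)) :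
    A ⊆ (occC A) ×ˢ (occR A) := by
  intro v hv
  exact Finset.mem_product.mpr ⟨Finset.mem_image.mpr ⟨v, hv, rfl⟩, Finset.mem_image.mpr ⟨v, hv, rfl⟩⟩

lemma occC_card_le (A : Finset (ZMod K × ZMod L)) : (occC A).card ≤ A.card :=
  Finset.card_image_le
lemma occR_card_le (A : Finset (ZMod K × ZMod L)) : (occR A).card ≤ A.card :=
  Finset.card_image_le

-- transpose
def trp (A : Finset (ZMod K × ZMod L)) : Finset (ZMod L × ZMod K) :=
  A.image (fun v => (v.2, v.1))

lemma mem_trp {A : Finset (ZMod K × ZMod L)} {x : ZMod K} {y : ZMod L} :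
    (y, x) ∈ trp A ↔ (x, y) ∈ A := by
  constructor
  · intro h
    obtain ⟨⟨a, b⟩, hab, heq⟩ := Finset.mem_image.mp h
    simp only [Prod.mk.injEq] at heq
    rw [← heq.1, ← heq.2]
    exact hab
  · intro h; exact Finset.mem_image.mpr ⟨(x,y), h, rfl⟩

lemma trp_insert (A : Finset (ZMod K × ZMod L)) (v : ZMod K × ZMod L) :
    trp (insert v A) = insert (v.2, v.1) (trp A) := by
  rw [trp, Finset.image_insert]; rfl

lemma trp_erase (A : Finset (ZMod K × ZMod L)) (v : ZMod K × ZMod L) :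
    trp (A.erase v) = (trp A).erase (v.2, v.1) := by
  rw [trp, Finset.image_erase (fun a b h => ?_)]
  · rfl
  · simp only [Prod.mk.injEq] at h
    exact Prod.ext h.2 h.1

lemma trp_card (A : Finset (ZMod K × ZMod L)) : (trp A).card = A.card := by
  rw [trp, Finset.card_image_of_injOn]
  intro a _ b _ h
  simp only [Prod.mk.injEq] at h
  exact Prod.ext h.2 h.1

lemma colSet_trp (A : Finset (ZMod K × ZMod L)) (y : ZMod L) :
    colSet (trp A) y = rowSet A y := by
  ext x; rw [mem_colSet, mem_rowSet, mem_trp]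

lemma rowSet_trp (A : Finset (ZMod K × ZMod L)) (x : ZMod K) :
    rowSet (trp A) x = colSet A x := by
  ext y; rw [mem_rowSet, mem_colSet, mem_trp]

lemma perim_trp (A : Finset (ZMod K × ZMod L)) : perim (trp A) = perim A := by
  unfold perim
  have h1 : ∑ y : ZMod L, tcount (colSet (trp A) y) = ∑ y : ZMod L, tcount (rowSet A y) :=
    Finset.sum_congr rfl (fun y _ => by rw [colSet_trp])
  have h2 : ∑ x : ZMod K, tcount (rowSet (trp A) x) = ∑ x : ZMod K, tcount (colSet A x) :=
    Finset.sum_congr rfl (fun x _ => by rw [rowSet_trp])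
  omega

lemma occC_trp (A : Finset (ZMod K × ZMod L)) : occC (trp A) = occR A := by
  ext y
  constructor
  · intro h
    obtain ⟨⟨b, a⟩, hab, heq⟩ := Finset.mem_image.mp h
    obtain ⟨⟨x', y'⟩, hv, hveq⟩ := Finset.mem_image.mp hab
    simp only [Prod.mk.injEq] at hveq
    refine Finset.mem_image.mpr ⟨(x', y'), hv, ?_⟩
    simp only
    rw [← heq, ← hveq.1]
  · intro h
    obtain ⟨v, hv, rfl⟩ := Finset.mem_image.mp h
    exact Finset.mem_image.mpr ⟨(v.2, v.1), Finset.mem_image.mpr ⟨v, hv, rfl⟩, rfl⟩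

lemma occR_trp (A : Finset (ZMod K × ZMod L)) : occR (trp A) = occC A := by
  ext x
  constructor
  · intro h
    obtain ⟨⟨b, a⟩, hab, heq⟩ := Finset.mem_image.mp h
    obtain ⟨⟨x', y'⟩, hv, hveq⟩ := Finset.mem_image.mp hab
    simp only [Prod.mk.injEq] at hveq
    refine Finset.mem_image.mpr ⟨(x', y'), hv, ?_⟩
    simp only
    rw [← heq, ← hveq.2]
  · intro h
    obtain ⟨v, hv, rfl⟩ := Finset.mem_image.mp h
    exact Finset.mem_image.mpr ⟨(v.2, v.1), Finset.mem_image.mpr ⟨v, hv, rfl⟩, rfl⟩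

lemma occC_univ : occC (univ : Finset (ZMod K × ZMod L)) = univ := by
  apply Finset.eq_univ_iff_forall.mpr
  intro x
  exact Finset.mem_image.mpr ⟨(x, 0), Finset.mem_univ _, rfl⟩

end Geo
end Aux


namespace Aux
section Energy
open Finset
set_option linter.unusedSectionVars false
set_option maxHeartbeats 1000000
variable {K L : ℕ} [NeZero K] [NeZero L]

def zeroSet (σ : Config K L) : Finset (Vtx K L) :=
  Finset.univ.filter fun v => σ v = 0

lemma mem_zeroSet {σ : Config K L} {v : Vtx K L} : v ∈ zeroSet σ ↔ σ v = 0 := by simp [zeroSet]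

def nbr (p : Vtx K L × Bool) : Vtx K L :=
  if p.2 then (p.1.1 + 1, p.1.2) else (p.1.1, p.1.2 + 1)

def slotEquiv (K L : ℕ) [NeZero K] [NeZero L] : (Vtx K L × Bool) ≃ (Vtx K L × Bool) where
  toFun p := (nbr p, p.2)
  invFun p := ((if p.2 then (p.1.1 - 1, p.1.2) else (p.1.1, p.1.2 - 1)), p.2)
  left_inv := by
    rintro ⟨⟨x, y⟩, b⟩
    cases b <;> simp [nbr]
  right_inv := by
    rintro ⟨⟨x, y⟩, b⟩
    cases b <;> simp [nbr]

lemma nEdge_eq_sum (σ : Config K L) (i j : Spin) :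
    nEdge K L σ i j = ∑ p : Vtx K L × Bool,
      (if (σ p.1 = i ∧ σ (nbr p) = j) ∨ (σ p.1 = j ∧ σ (nbr p) = i) then 1 else 0) := by
  rw [nEdge, Finset.card_filter]
  rfl

lemma card_slots : Fintype.card (Vtx K L × Bool) = 2 * (K * L) := by
  rw [Fintype.card_prod, Fintype.card_prod, Fintype.card_bool, ZMod.card, ZMod.card]
  ring

lemma edge_partition (σ : Config K L) (r : Spin) (hr : r = 1 ∨ r = 2)
    (hσ : ∀ v, σ v = 0 ∨ σ v = r) :
    nEdge K L σ 0 0 + nEdge K L σ r r + nEdge K L σ 0 r = 2 * (K * L) := by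
  rw [nEdge_eq_sum, nEdge_eq_sum, nEdge_eq_sum, ← Finset.sum_add_distrib,
    ← Finset.sum_add_distrib]
  have key : ∀ p : Vtx K L × Bool,
      ((if (σ p.1 = 0 ∧ σ (nbr p) = 0) ∨ (σ p.1 = 0 ∧ σ (nbr p) = 0) then 1 else 0)
      + (if (σ p.1 = r ∧ σ (nbr p) = r) ∨ (σ p.1 = r ∧ σ (nbr p) = r) then 1 else 0))
      + (if (σ p.1 = 0 ∧ σ (nbr p) = r) ∨ (σ p.1 = r ∧ σ (nbr p) = 0) then 1 else 0) = 1 := by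
    intro p
    rcases hσ p.1 with h1 | h1 <;> rcases hσ (nbr p) with h2 | h2 <;>
      rcases hr with rfl | rfl <;> rw [h1, h2] <;> decide
  rw [Finset.sum_congr rfl (fun p _ => key p), Finset.sum_const, Finset.card_univ, card_slots,
    smul_eq_mul, mul_one]

lemma edge_degree (σ : Config K L) (r : Spin) (hr : r = 1 ∨ r = 2)
    (hσ : ∀ v, σ v = 0 ∨ σ v = r) :
    2 * nEdge K L σ 0 0 + nEdge K L σ 0 r = 4 * (zeroSet σ).card := by
  rw [nEdge_eq_sum, nEdge_eq_sum, Finset.mul_sum, ← Finset.sum_add_distrib]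
  have key : ∀ p : Vtx K L × Bool,
      (2 * (if (σ p.1 = 0 ∧ σ (nbr p) = 0) ∨ (σ p.1 = 0 ∧ σ (nbr p) = 0) then 1 else 0)
      + (if (σ p.1 = 0 ∧ σ (nbr p) = r) ∨ (σ p.1 = r ∧ σ (nbr p) = 0) then 1 else 0))
      = (if σ p.1 = 0 then 1 else 0) + (if σ (nbr p) = 0 then 1 else 0) := by
    intro p
    rcases hσ p.1 with h1 | h1 <;> rcases hσ (nbr p) with h2 | h2 <;>
      rcases hr with rfl | rfl <;> rw [h1, h2] <;> decide
  rw [Finset.sum_congr rfl (fun p _ => key p), Finset.sum_add_distrib]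
  have hshift : ∑ p : Vtx K L × Bool, (if σ (nbr p) = 0 then (1:ℕ) else 0)
      = ∑ p : Vtx K L × Bool, (if σ p.1 = 0 then 1 else 0) := by
    exact Equiv.sum_comp (slotEquiv K L) (fun p => if σ p.1 = 0 then 1 else 0)
  rw [hshift]
  have hcount : ∑ p : Vtx K L × Bool, (if σ p.1 = 0 then (1:ℕ) else 0)
      = 2 * (zeroSet σ).card := by
    rw [Fintype.sum_prod_type]
    have : ∀ v : Vtx K L, (∑ _b : Bool, if σ v = 0 then (1:ℕ) else 0)
        = 2 * (if σ v = 0 then 1 else 0) := by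
      intro v; rw [Fintype.sum_bool]; ring
    rw [Finset.sum_congr rfl (fun v _ => this v), ← Finset.mul_sum, zeroSet,
      Finset.card_filter]
  rw [hcount]
  ring

lemma edge_perim (σ : Config K L) (r : Spin) (hr : r = 1 ∨ r = 2)
    (hσ : ∀ v, σ v = 0 ∨ σ v = r) :
    nEdge K L σ 0 r = perim (zeroSet σ) := by
  have hr0 : r ≠ 0 := by rcases hr with rfl | rfl <;> decide
  set A := zeroSet σ with hA
  rw [nEdge_eq_sum, Fintype.sum_prod_type]
  have hsplit : ∀ v : Vtx K L, (∑ b : Bool,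
      if (σ (v, b).1 = 0 ∧ σ (nbr (v, b)) = r) ∨ (σ (v, b).1 = r ∧ σ (nbr (v, b)) = 0)
        then (1:ℕ) else 0)
      = ((if (σ v = 0 ∧ σ (v.1 + 1, v.2) = r) ∨ (σ v = r ∧ σ (v.1 + 1, v.2) = 0) then 1 else 0)
      + (if (σ v = 0 ∧ σ (v.1, v.2 + 1) = r) ∨ (σ v = r ∧ σ (v.1, v.2 + 1) = 0) then 1 else 0)) := by
    intro v
    rw [Fintype.sum_bool]
    rfl
  rw [Finset.sum_congr rfl (fun v _ => hsplit v), Finset.sum_add_distrib]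
  have hvert : ∑ v : Vtx K L,
      (if (σ v = 0 ∧ σ (v.1, v.2 + 1) = r) ∨ (σ v = r ∧ σ (v.1, v.2 + 1) = 0) then (1:ℕ) else 0)
      = ∑ x : ZMod K, tcount (colSet A x) := by
    rw [Fintype.sum_prod_type]
    apply Finset.sum_congr rfl
    intro x _
    rw [tcount, Finset.card_filter]
    apply Finset.sum_congr rfl
    intro y _
    have hm1 : (y ∈ colSet A x) = (σ (x, y) = 0) := by
      rw [mem_colSet, hA, mem_zeroSet]
    have hm2 : (y + 1 ∈ colSet A x) = (σ (x, y + 1) = 0) := by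
      rw [mem_colSet, hA, mem_zeroSet]
    rcases hσ (x, y) with h1 | h1 <;> rcases hσ (x, y + 1) with h2 | h2 <;>
      simp only [hm1, hm2, h1, h2] <;> rcases hr with rfl | rfl <;> decide
  have hhorz : ∑ v : Vtx K L,
      (if (σ v = 0 ∧ σ (v.1 + 1, v.2) = r) ∨ (σ v = r ∧ σ (v.1 + 1, v.2) = 0) then (1:ℕ) else 0)
      = ∑ y : ZMod L, tcount (rowSet A y) := by
    rw [Fintype.sum_prod_type, Finset.sum_comm]
    apply Finset.sum_congr rfl
    intro y _
    rw [tcount, Finset.card_filter]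
    apply Finset.sum_congr rfl
    intro x _
    have hm1 : (x ∈ rowSet A y) = (σ (x, y) = 0) := by
      rw [mem_rowSet, hA, mem_zeroSet]
    have hm2 : (x + 1 ∈ rowSet A y) = (σ (x + 1, y) = 0) := by
      rw [mem_rowSet, hA, mem_zeroSet]
    rcases hσ (x, y) with h1 | h1 <;> rcases hσ (x + 1, y) with h2 | h2 <;>
      simp only [hm1, hm2, h1, h2] <;> rcases hr with rfl | rfl <;> decide
  rw [hvert, hhorz, perim]
  omega

lemma nEdge_zero_of_missing (σ : Config K L) (i j s : Spin) (hs : ∀ v, σ v ≠ s)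
    (hij : i = s ∨ j = s) : nEdge K L σ i j = 0 := by
  rw [nEdge, Finset.card_eq_zero, Finset.filter_eq_empty_iff]
  intro p _
  rintro (⟨h1, h2⟩ | ⟨h1, h2⟩) <;> rcases hij with rfl | rfl
  · exact hs _ h1
  · exact hs _ h2
  · exact hs _ h2
  · exact hs _ h1

lemma H_const_one (C : Couplings) :
    H K L C (const K L 1) = -(C.J22 * (2 * (K * L))) := by
  have hmiss0 : ∀ v : Vtx K L, const K L 1 v ≠ 0 := by intro v; show (1:Spin) ≠ 0; decide
  have hmiss2 : ∀ v : Vtx K L, const K L 1 v ≠ 2 := by intro v; show (1:Spin) ≠ 2; decide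
  have h00 := nEdge_zero_of_missing (K := K) (L := L) (const K L 1) 0 0 0 hmiss0 (Or.inl rfl)
  have h22 := nEdge_zero_of_missing (K := K) (L := L) (const K L 1) 2 2 2 hmiss2 (Or.inl rfl)
  have h01 := nEdge_zero_of_missing (K := K) (L := L) (const K L 1) 0 1 0 hmiss0 (Or.inl rfl)
  have h02 := nEdge_zero_of_missing (K := K) (L := L) (const K L 1) 0 2 0 hmiss0 (Or.inl rfl)
  have h12 := nEdge_zero_of_missing (K := K) (L := L) (const K L 1) 1 2 2 hmiss2 (Or.inr rfl)
  have h11 : nEdge K L (const K L 1) 1 1 = 2 * (K * L) := by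
    rw [nEdge, Finset.filter_true_of_mem, Finset.card_univ, card_slots]
    intro p _
    exact Or.inl ⟨rfl, rfl⟩
  rw [H, h00, h22, h01, h02, h12, h11]
  push_cast
  ring

lemma energy_eq (C : Couplings) (h2233 : C.J22 = C.J33) (h1213 : C.J12 = C.J13)
    (σ : Config K L) (r : Spin) (hr : r = 1 ∨ r = 2) (hσ : ∀ v, σ v = 0 ∨ σ v = r) :
    H K L C σ = H K L C (const K L 1)
      + (C.γ12 + C.γ1 / 2) * (perim (zeroSet σ) : ℝ)
      - 2 * C.γ1 * ((zeroSet σ).card : ℝ) := by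
  have h1 : ((nEdge K L σ 0 0 : ℝ)) + (nEdge K L σ r r : ℝ) + (nEdge K L σ 0 r : ℝ)
      = 2 * (K * L) := by exact_mod_cast edge_partition σ r hr hσ
  have h2 : 2 * ((nEdge K L σ 0 0 : ℝ)) + (nEdge K L σ 0 r : ℝ)
      = 4 * ((zeroSet σ).card : ℝ) := by exact_mod_cast edge_degree σ r hr hσ
  have h3 : ((nEdge K L σ 0 r : ℝ)) = (perim (zeroSet σ) : ℝ) := by
    exact_mod_cast edge_perim σ r hr hσ
  rw [H_const_one]
  simp only [Couplings.γ1, Couplings.γ12]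
  rcases hr with rfl | rfl
  · have hmiss : ∀ v, σ v ≠ 2 := by
      intro v; rcases hσ v with h | h <;> rw [h] <;> decide
    have e22 := nEdge_zero_of_missing (K := K) (L := L) σ 2 2 2 hmiss (Or.inl rfl)
    have e02 := nEdge_zero_of_missing (K := K) (L := L) σ 0 2 2 hmiss (Or.inr rfl)
    have e12 := nEdge_zero_of_missing (K := K) (L := L) σ 1 2 2 hmiss (Or.inr rfl)
    rw [H, e22, e02, e12]
    push_cast
    linear_combination (-C.J22) * h1 + ((C.J22 - C.J11) / 2) * h2
      + (C.J12 + C.J22 + (C.J11 - C.J22) / 2) * h3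
  · have hmiss : ∀ v, σ v ≠ 1 := by
      intro v; rcases hσ v with h | h <;> rw [h] <;> decide
    have e11 := nEdge_zero_of_missing (K := K) (L := L) σ 1 1 1 hmiss (Or.inl rfl)
    have e01 := nEdge_zero_of_missing (K := K) (L := L) σ 0 1 1 hmiss (Or.inr rfl)
    have e12 := nEdge_zero_of_missing (K := K) (L := L) σ 1 2 1 hmiss (Or.inl rfl)
    rw [H, e11, e01, e12, ← h2233, ← h1213]
    push_cast
    linear_combination (-C.J22) * h1 + ((C.J22 - C.J11) / 2) * h2
      + (C.J12 + C.J22 + (C.J11 - C.J22) / 2) * h3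

end Energy
end Aux


namespace Aux
section Arith
open Finset
set_option linter.unusedSectionVars false
set_option maxHeartbeats 1000000

lemma lstar_facts {K L : ℕ} (C : Couplings) (hadm : Admissible K L C) :
    0 < C.γ1 ∧ 2 ≤ lstar C ∧
    Γstar C = 4 * (C.γ12 + C.γ1 / 2) * (lstar C : ℝ)
      - 2 * C.γ1 * ((lstar C : ℝ) ^ 2 - (lstar C : ℝ) + 1) ∧
    ((lstar C : ℝ) - 1) * C.γ1 < C.γ12 + C.γ1 / 2 ∧
    C.γ12 + C.γ1 / 2 < (lstar C : ℝ) * C.γ1 := by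
  have hγ1 : 0 < C.γ1 := by
    simp only [Couplings.γ1]; linarith [hadm.h1122]
  have hγ23 : 0 < C.γ23 := by
    simp only [Couplings.γ23]; linarith [hadm.pos23, hadm.pos22]
  have hγ12 : 0 < C.γ12 := by
    simp only [Couplings.γ12]; linarith [hadm.pos12, hadm.pos22]
  set c : ℝ := C.γ12 + C.γ1 / 2 with hc
  set x : ℝ := (2 * C.γ12 + C.γ1) / (2 * C.γ1) with hxdef
  have hx : x = c / C.γ1 := by
    rw [hxdef, hc]; field_simp
  have hcγ : 2 * C.γ12 > C.γ1 := by linarith [hadm.hC, hγ23]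
  have hx1 : 1 < x := by
    rw [hx, lt_div_iff₀ hγ1]
    rw [hc]; linarith
  have hℓ2 : 2 ≤ lstar C := by
    have : 1 < ⌈x⌉₊ := Nat.lt_ceil.mpr (by exact_mod_cast hx1)
    exact this
  have hceilnn : (0:ℤ) ≤ ⌈x⌉ := Int.ceil_nonneg (by linarith)
  have hcast : ((lstar C : ℕ) : ℤ) = ⌈x⌉ := by
    rw [lstar, ← Int.ceil_toNat, Int.toNat_of_nonneg hceilnn]
  have hcastR : ((lstar C : ℕ) : ℝ) = ((⌈x⌉ : ℤ) : ℝ) := by exact_mod_cast hcast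
  have harg : (C.γ12 + C.γ1 / 2) / C.γ1 = x := by rw [hx, hc]
  have hΓ : Γstar C = 4 * c * (lstar C : ℝ)
      - 2 * C.γ1 * ((lstar C : ℝ) ^ 2 - (lstar C : ℝ) + 1) := by
    rw [Γstar, fh, harg, ← hcastR, hc]
  have hub : x < (lstar C : ℝ) := by
    rcases lt_or_eq_of_le (Int.le_ceil x) with h | h
    · rw [hcastR]; exact h
    · exact absurd h (by rw [hxdef]; exact hadm.hA ⌈x⌉)
  have hlb : (lstar C : ℝ) - 1 < x := by
    have := Int.ceil_lt_add_one x
    rw [hcastR]; linarith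
  refine ⟨hγ1, hℓ2, hΓ, ?_, ?_⟩
  · have h' : (lstar C : ℝ) - 1 < c / C.γ1 := by rw [← hx]; exact hlb
    calc ((lstar C : ℝ) - 1) * C.γ1 < (c / C.γ1) * C.γ1 := mul_lt_mul_of_pos_right h' hγ1
    _ = c := by field_simp
  · have h' : c / C.γ1 < (lstar C : ℝ) := by rw [← hx]; exact hub
    calc c = (c / C.γ1) * C.γ1 := by field_simp
    _ < (lstar C : ℝ) * C.γ1 := mul_lt_mul_of_pos_right h' hγ1

lemma whge {w h n m : ℕ} (h1 : (m+2)*(m+1) + 1 ≤ n) (h2 : n ≤ w * h)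
    (h3 : w + h ≤ 2*m+3) : False := by
  have h4 : (4:ℤ) * ((w:ℤ)*h) ≤ ((w:ℤ)+h)^2 := by nlinarith [sq_nonneg ((w:ℤ)-(h:ℤ))]
  have h5 : (w:ℤ)+h ≤ 2*(m:ℤ)+3 := by exact_mod_cast h3
  have h6 : ((m:ℤ)+2)*((m:ℤ)+1)+1 ≤ (w:ℤ)*h := by
    calc ((m:ℤ)+2)*((m:ℤ)+1)+1 = (((m+2)*(m+1)+1 : ℕ) : ℤ) := by push_cast; ring
    _ ≤ ((n:ℕ):ℤ) := by exact_mod_cast h1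
    _ ≤ (w:ℤ)*h := by exact_mod_cast h2
  nlinarith

lemma ivt (f : ℕ → ℕ) (j : ℕ) (hstep : ∀ k < j, f (k+1) = f k + 1 ∨ f k = f (k+1) + 1)
    (i : ℕ) (hij : i ≤ j) (m : ℕ) (h1 : f i ≤ m) (h2 : m ≤ f j) :
    ∃ k, i ≤ k ∧ k ≤ j ∧ f k = m := by
  induction j with
  | zero =>
    obtain rfl : i = 0 := by omega
    exact ⟨0, le_refl _, le_refl _, by omega⟩
  | succ j ih =>
    rcases Nat.eq_or_lt_of_le hij with rfl | hij'
    · exact ⟨j + 1, le_refl _, le_refl _, by omega⟩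
    · have hj : i ≤ j := by omega
      by_cases hm : m ≤ f j
      · obtain ⟨k, hk⟩ := ih (fun k hk => hstep k (by omega)) hj hm
        exact ⟨k, hk.1, by omega, hk.2.2⟩
      · rcases hstep j (by omega) with h | h
        · exact ⟨j+1, by omega, by omega, by omega⟩
        · omega

lemma sum_eq_two_of {α : Type*} (s : Finset α) (f : α → ℕ)
    (hle : ∑ i ∈ s, f i ≤ 2 * s.card) (hge : ∀ i ∈ s, 2 ≤ f i) :
    ∀ i ∈ s, f i = 2 := by
  intro i hi
  by_contra hne
  have h3 : 2 < f i := by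
    have := hge i hi; omega
  have : ∑ _j ∈ s, 2 < ∑ j ∈ s, f j :=
    Finset.sum_lt_sum hge ⟨i, hi, h3⟩
  rw [Finset.sum_const, smul_eq_mul] at this
  omega

section Conf
variable {K L : ℕ} [NeZero K] [NeZero L]

lemma tcount_eq_two_all (A : Finset (ZMod K × ZMod L)) (hC : (occC A).card < K)
    (hR : (occR A).card < L)
    (hp : perim A ≤ 2 * ((occC A).card + (occR A).card)) :
    (∀ x ∈ occC A, tcount (colSet A x) = 2) ∧ (∀ y ∈ occR A, tcount (rowSet A y) = 2) := by
  have h1 := sum_col_ge A hR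
  have h2 := sum_row_ge A hC
  have hcol : ∑ x ∈ occC A, tcount (colSet A x) ≤ 2 * (occC A).card := by
    have hsub : ∑ x ∈ occC A, tcount (colSet A x) ≤ ∑ x : ZMod K, tcount (colSet A x) :=
      Finset.sum_le_sum_of_subset_of_nonneg (Finset.subset_univ _) (by intros; positivity)
    rw [perim] at hp
    omega
  have hrow : ∑ y ∈ occR A, tcount (rowSet A y) ≤ 2 * (occR A).card := by
    have hsub : ∑ y ∈ occR A, tcount (rowSet A y) ≤ ∑ y : ZMod L, tcount (rowSet A y) :=
      Finset.sum_le_sum_of_subset_of_nonneg (Finset.subset_univ _) (by intros; positivity)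
    rw [perim] at hp
    omega
  constructor
  · apply sum_eq_two_of _ _ hcol
    intro x hx
    apply two_le_tcount (colSet_nonempty hx)
    intro hU
    have := Finset.card_le_card (colSet_subset_occR A x)
    rw [hU] at this
    simp only [Finset.card_univ, ZMod.card] at this
    omega
  · apply sum_eq_two_of _ _ hrow
    intro y hy
    apply two_le_tcount (rowSet_nonempty hy)
    intro hU
    have := Finset.card_le_card (rowSet_subset_occC A y)
    rw [hU] at this
    simp only [Finset.card_univ, ZMod.card] at this
    omega

lemma occC_insert (A : Finset (ZMod K × ZMod L)) (v : ZMod K × ZMod L) :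
    occC (insert v A) = insert v.1 (occC A) := by
  rw [occC, Finset.image_insert]; rfl
lemma occR_insert (A : Finset (ZMod K × ZMod L)) (v : ZMod K × ZMod L) :
    occR (insert v A) = insert v.2 (occR A) := by
  rw [occR, Finset.image_insert]; rfl

lemma confinement {ℓ : ℕ} {c γ1 Γb : ℝ}
    (hK : 2 * ℓ ^ 2 ≤ K) (hL : 2 * ℓ ^ 2 ≤ L) (hℓ : 2 ≤ ℓ)
    (hγ1 : 0 < γ1) (hc : ((ℓ : ℝ) - 1) * γ1 < c)
    (hΓ : Γb = 4 * c * ℓ - 2 * γ1 * ((ℓ : ℝ) ^ 2 - ℓ + 1))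
    (len : ℕ) (F : ℕ → Finset (ZMod K × ZMod L))
    (hstep : ∀ k < len, ∃ v, (v ∉ F k ∧ F (k+1) = insert v (F k)) ∨ F (k+1) = (F k).erase v)
    (hE : ∀ k ≤ len, c * (perim (F k) : ℝ) - 2 * γ1 * ((F k).card : ℝ) ≤ Γb)
    (hvol : ∀ k ≤ len, ℓ * (ℓ - 1) + 1 ≤ (F k).card)
    (hw0 : (occC (F 0)).card ≤ ℓ - 1) (hh0 : (occR (F 0)).card ≤ ℓ + 1) :
    ∀ k ≤ len, (occC (F k)).card ≤ ℓ - 1 ∧ (occR (F k)).card ≤ ℓ + 1 := by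
  have hlR : (2:ℝ) ≤ (ℓ:ℝ) := by exact_mod_cast hℓ
  have hcpos : 0 < c := by nlinarith
  have hℓK : ℓ + 2 < K := by nlinarith
  have hℓL : ℓ + 2 < L := by nlinarith
  have hl1R : ((ℓ - 1 : ℕ) : ℝ) = (ℓ : ℝ) - 1 := by
    rw [Nat.cast_sub (by omega)]; norm_num
  intro k hk
  induction k with
  | zero => exact ⟨hw0, hh0⟩
  | succ k ih =>
    obtain ⟨ihw, ihh⟩ := ih (by omega)
    obtain ⟨v, hv⟩ := hstep k (by omega)
    rcases hv with ⟨hvmem, hins⟩ | hdel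
    · -- insert case
      set A := F k with hA
      have hn : ℓ * (ℓ - 1) + 1 ≤ A.card := hvol k (by omega)
      have hcardA' : (F (k+1)).card = A.card + 1 := by
        rw [hins, Finset.card_insert_of_notMem hvmem]
      by_cases hv1 : v.1 ∈ occC A
      · have hoccC' : occC (F (k+1)) = occC A := by
          rw [hins, occC_insert, Finset.insert_eq_self.mpr hv1]
        by_cases hv2 : v.2 ∈ occR A
        · have hoccR' : occR (F (k+1)) = occR A := by
            rw [hins, occR_insert, Finset.insert_eq_self.mpr hv2]
          rw [hoccC', hoccR']
          exact ⟨ihw, ihh⟩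
        · have hoccR' : occR (F (k+1)) = insert v.2 (occR A) := by
            rw [hins, occR_insert]
          have hcR' : (occR (F (k+1))).card = (occR A).card + 1 := by
            rw [hoccR', Finset.card_insert_of_notMem hv2]
          by_cases hh : (occR A).card ≤ ℓ
          · exact ⟨by rw [hoccC']; exact ihw, by omega⟩
          · -- (occR A).card = ℓ + 1 : contradiction
            exfalso
            have hhA : (occR A).card = ℓ + 1 := by omega
            have hwA : (occC A).card = ℓ - 1 := by
              have h1 : A.card ≤ (occC A).card * (occR A).card := card_le_occ_mul A
              rw [hhA] at h1
              by_contra hne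
              have hle2 : (occC A).card ≤ ℓ - 2 := by omega
              have h2 : A.card ≤ (ℓ - 2) * (ℓ + 1) :=
                le_trans h1 (Nat.mul_le_mul_right _ hle2)
              obtain ⟨m, rfl⟩ : ∃ m, ℓ = m + 2 := ⟨ℓ - 2, by omega⟩
              have hs : m + 2 - 1 = m + 1 := by omega
              have hs2 : m + 2 - 2 = m := by omega
              rw [hs] at hn
              rw [hs2] at hle2
              have h2' : A.card ≤ m * (m + 2 + 1) :=
                le_trans h1 (Nat.mul_le_mul_right _ hle2)
              nlinarith [h2', hn]
            have hnle : A.card ≤ (ℓ - 1) * (ℓ + 1) := by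
              have h1 := card_le_occ_mul A
              rw [hhA, hwA] at h1
              exact h1
            have hEk := hE (k+1) hk
            have hperimge : 2 * ((occC (F (k+1))).card + (occR (F (k+1))).card)
                ≤ perim (F (k+1)) := by
              apply perim_ge
              · rw [hoccC', hwA]; omega
              · rw [hcR', hhA]; omega
            rw [hoccC', hwA, hcR', hhA] at hperimge
            have hperimR : 2 * (((ℓ:ℝ) - 1) + ((ℓ:ℝ) + 1 + 1)) ≤ (perim (F (k+1)) : ℝ) := by
              calc 2 * (((ℓ:ℝ) - 1) + ((ℓ:ℝ) + 1 + 1))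
                  = ((2 * ((ℓ - 1) + (ℓ + 1 + 1)) : ℕ) : ℝ) := by push_cast [hl1R]; ring
              _ ≤ (perim (F (k+1)) : ℝ) := by exact_mod_cast hperimge
            have hcard' : ((F (k+1)).card : ℝ) = (A.card : ℝ) + 1 := by
              exact_mod_cast hcardA'
            have hnR : (A.card : ℝ) ≤ ((ℓ:ℝ) - 1) * ((ℓ:ℝ) + 1) := by
              calc (A.card : ℝ) ≤ (((ℓ - 1) * (ℓ + 1) : ℕ) : ℝ) := by exact_mod_cast hnle
              _ = ((ℓ:ℝ) - 1) * ((ℓ:ℝ) + 1) := by push_cast [hl1R]; ring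
            have hchain : c * (2 * (((ℓ:ℝ) - 1) + ((ℓ:ℝ) + 1 + 1))) - 2 * γ1 * ((A.card:ℝ) + 1) ≤ Γb := by
              calc c * (2 * (((ℓ:ℝ) - 1) + ((ℓ:ℝ) + 1 + 1))) - 2 * γ1 * ((A.card:ℝ) + 1)
                  ≤ c * (perim (F (k+1)) : ℝ) - 2 * γ1 * ((F (k+1)).card : ℝ) := by
                    rw [hcard']
                    have := mul_le_mul_of_nonneg_left hperimR (le_of_lt hcpos)
                    linarith
              _ ≤ Γb := hEk
            rw [hΓ] at hchain
            nlinarith [hchain, hnR, hc, hγ1, hlR]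
      · -- new column : contradiction
        exfalso
        set n := A.card with hndef
        set w := (occC A).card with hwdef
        set h' := (occR (F (k+1))).card with hh'def
        have hw1 : 1 ≤ w := by
          have hApos : 0 < A.card :=
            lt_of_lt_of_le (Nat.succ_pos 0) (le_trans (Nat.le_add_left 1 _) hn)
          rw [hwdef]
          exact Finset.card_pos.mpr ((Finset.card_pos.mp hApos).image Prod.fst)
        have hoccC' : (occC (F (k+1))).card = w + 1 := by
          rw [hins, occC_insert, Finset.card_insert_of_notMem hv1]
        have hh'le : h' ≤ (occR A).card + 1 := by
          rw [hh'def, hins, occR_insert]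
          exact le_trans (Finset.card_insert_le _ _) (by omega)
        have hnwh : n ≤ w * h' := by
          have h1 := card_le_occ_mul A
          have h2 : (occR A).card ≤ h' := by
            rw [hh'def, hins, occR_insert]
            exact Finset.card_le_card (Finset.subset_insert _ _)
          calc n ≤ w * (occR A).card := h1
          _ ≤ w * h' := Nat.mul_le_mul_left _ h2
        have hEk := hE (k+1) hk
        have hperimge : 2 * ((w + 1) + h') ≤ perim (F (k+1)) := by
          have := perim_ge (F (k+1)) (by rw [hoccC']; omega) (by
            have : h' ≤ ℓ + 2 := by omega
            omega)
          rw [hoccC'] at this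
          exact this
        -- real arithmetic
        have hwR : (w : ℝ) ≤ (ℓ : ℝ) - 1 := by
          calc (w:ℝ) ≤ ((ℓ - 1 : ℕ) : ℝ) := by exact_mod_cast ihw
          _ = (ℓ:ℝ) - 1 := hl1R
        have hnR : (ℓ:ℝ) * ((ℓ:ℝ) - 1) + 1 ≤ (n:ℝ) := by
          calc (ℓ:ℝ) * ((ℓ:ℝ) - 1) + 1 = ((ℓ * (ℓ - 1) + 1 : ℕ) : ℝ) := by
                push_cast [hl1R]; ring
          _ ≤ (n:ℝ) := by exact_mod_cast hn
        have hnwhR : (n:ℝ) ≤ (w:ℝ) * (h':ℝ) := by exact_mod_cast hnwh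
        have hw1R : (1:ℝ) ≤ (w:ℝ) := by exact_mod_cast hw1
        have hkey : ((ℓ:ℝ) - 1 - w) * ((n:ℝ) - ((ℓ:ℝ)-1) * w) ≥ 0 := by
          apply mul_nonneg
          · linarith
          · nlinarith
        have hWHm : (w:ℝ) * (((ℓ:ℝ)-1) * ((w:ℝ) + h')) ≥ (w:ℝ) * ((((ℓ:ℝ)-1))^2 + n) := by
          nlinarith [hkey, mul_le_mul_of_nonneg_left hnwhR (show (0:ℝ) ≤ (ℓ:ℝ)-1 by linarith)]
        have hWH : ((ℓ:ℝ)-1) * ((w:ℝ) + h') ≥ (((ℓ:ℝ)-1))^2 + n :=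
          le_of_mul_le_mul_left hWHm (by linarith)
        have hfac : ((ℓ:ℝ)-1) * ((w:ℝ) + h' + 1 - 2*ℓ) ≥ (n:ℝ) - ℓ*(ℓ-1) := by nlinarith [hWH]
        have hD : (1:ℝ) ≤ (n:ℝ) - ℓ*(ℓ-1) := by linarith
        have hpos : (0:ℝ) < (w:ℝ) + h' + 1 - 2*ℓ := by nlinarith [hfac, hD]
        have hlast : 2*γ1*((n:ℝ) - ℓ*(ℓ-1)) < 2*c*((w:ℝ) + h' + 1 - 2*ℓ) := by
          have h1 : ((ℓ:ℝ)-1)*γ1*((w:ℝ) + h' + 1 - 2*ℓ) < c*((w:ℝ) + h' + 1 - 2*ℓ) :=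
            mul_lt_mul_of_pos_right hc hpos
          have h2 : γ1*((n:ℝ) - ℓ*(ℓ-1)) ≤ γ1*(((ℓ:ℝ)-1) * ((w:ℝ) + h' + 1 - 2*ℓ)) :=
            mul_le_mul_of_nonneg_left hfac (le_of_lt hγ1)
          nlinarith [h1, h2]
        have hperimR : 2 * (((w:ℝ) + 1) + (h':ℝ)) ≤ (perim (F (k+1)) : ℝ) := by
          calc 2 * (((w:ℝ) + 1) + (h':ℝ)) = ((2 * ((w + 1) + h') : ℕ) : ℝ) := by push_cast; ring
          _ ≤ (perim (F (k+1)) : ℝ) := by exact_mod_cast hperimge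
        have hcard' : ((F (k+1)).card : ℝ) = (n : ℝ) + 1 := by exact_mod_cast hcardA'
        have hchain : c * (2*((w:ℝ) + 1 + h')) - 2*γ1*((n:ℝ)+1) ≤ Γb := by
          calc c * (2*((w:ℝ) + 1 + h')) - 2*γ1*((n:ℝ)+1)
              ≤ c * (perim (F (k+1)) : ℝ) - 2 * γ1 * ((F (k+1)).card : ℝ) := by
                rw [hcard']
                have := mul_le_mul_of_nonneg_left hperimR (le_of_lt hcpos)
                push_cast at this ⊢
                linarith
          _ ≤ Γb := hEk
        rw [hΓ] at hchain
        linarith [hlast, hchain]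
    · -- erase case
      have hsub : F (k+1) ⊆ F k := by rw [hdel]; exact Finset.erase_subset _ _
      constructor
      · exact le_trans (Finset.card_le_card (Finset.image_subset_image hsub)) ihw
      · exact le_trans (Finset.card_le_card (Finset.image_subset_image hsub)) ihh

end Conf
end Arith
end Aux


namespace Aux
section Rigid
open Finset
set_option linter.unusedSectionVars false
set_option maxHeartbeats 1000000
variable {K L : ℕ} [NeZero K] [NeZero L]

lemma rect_structure {ℓ : ℕ} {c γ1 Γb : ℝ}
    (hK : 2 * ℓ ^ 2 ≤ K) (hL : 2 * ℓ ^ 2 ≤ L) (hℓ : 2 ≤ ℓ)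
    (hγ1 : 0 < γ1) (hcpos : 0 < c)
    (hΓ : Γb = 4 * c * ℓ - 2 * γ1 * ((ℓ : ℝ) ^ 2 - ℓ + 1))
    (A : Finset (ZMod K × ZMod L))
    (hcard : A.card = ℓ * (ℓ - 1))
    (hE : c * (perim A : ℝ) - 2 * γ1 * (A.card : ℝ) ≤ Γb) :
    ∃ (x0 : ZMod K) (y0 : ZMod L),
      (((occC A).card = ℓ - 1 ∧ (occR A).card = ℓ) ∨
        ((occC A).card = ℓ ∧ (occR A).card = ℓ - 1)) ∧
      occC A = arc x0 ((occC A).card) ∧ occR A = arc y0 ((occR A).card) ∧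
      A = arc x0 ((occC A).card) ×ˢ arc y0 ((occR A).card) := by
  obtain ⟨m, rfl⟩ : ∃ m, ℓ = m + 2 := ⟨ℓ - 2, by omega⟩
  have hsub : m + 2 - 1 = m + 1 := by omega
  rw [hsub] at hcard
  have hcardK : A.card < K := by rw [hcard]; nlinarith
  have hcardL : A.card < L := by rw [hcard]; nlinarith
  have hwK : (occC A).card < K := lt_of_le_of_lt (occC_card_le A) hcardK
  have hhL : (occR A).card < L := lt_of_le_of_lt (occR_card_le A) hcardL
  set w := (occC A).card with hw
  set h := (occR A).card with hh
  have hperimge : 2 * (w + h) ≤ perim A := perim_ge A hwK hhL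
  have hcardle : A.card ≤ w * h := card_le_occ_mul A
  have hcardR : (A.card : ℝ) = ((m:ℝ) + 2) * ((m:ℝ) + 1) := by rw [hcard]; push_cast; ring
  have hpub : (perim A : ℝ) < 4 * ((m:ℝ) + 2) := by
    rw [hΓ] at hE
    push_cast at hE
    nlinarith [hE, hγ1, hcpos, hcardR]
  have hpubN : perim A < 4 * m + 8 := by
    have : (perim A : ℝ) < ((4 * m + 8 : ℕ) : ℝ) := by push_cast; linarith
    exact_mod_cast this
  have hwh1 : 2 * m + 3 ≤ w + h := by
    by_contra hcon
    push_neg at hcon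
    have h4 : (4:ℤ) * ((w:ℤ) * (h:ℤ)) ≤ ((w:ℤ) + h)^2 := by nlinarith [sq_nonneg ((w:ℤ) - (h:ℤ))]
    have h5 : (w:ℤ) + h ≤ 2*m + 2 := by
      have : w + h ≤ 2*m+2 := by omega
      exact_mod_cast this
    have h6 : (A.card : ℤ) ≤ (w:ℤ) * h := by exact_mod_cast hcardle
    have h7 : (A.card : ℤ) = ((m:ℤ)+2) * ((m:ℤ)+1) := by
      rw [hcard]; push_cast; ring
    nlinarith [h4, h5, h6, h7]
  obtain ⟨t, ht⟩ := perim_even A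
  have hperim : perim A = 4 * m + 6 := by omega
  have hwh2 : w + h = 2 * m + 3 := by omega
  have hqd : ((w:ℤ) - ((m:ℤ)+1)) * ((w:ℤ) - ((m:ℤ)+2)) = 0 := by
    have h6 : (A.card : ℤ) ≤ (w:ℤ) * h := by exact_mod_cast hcardle
    have h7 : (A.card : ℤ) = ((m:ℤ)+2) * ((m:ℤ)+1) := by rw [hcard]; push_cast; ring
    have h8 : (w:ℤ) + h = 2*(m:ℤ) + 3 := by exact_mod_cast hwh2
    have h9 : ((w:ℤ) - ((m:ℤ)+1)) * ((w:ℤ) - ((m:ℤ)+2)) ≥ 0 := by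
      rcases le_or_gt (w:ℤ) ((m:ℤ)+1) with hle | hgt
      · have := mul_nonneg (by linarith : (0:ℤ) ≤ ((m:ℤ)+1) - w)
          (by linarith : (0:ℤ) ≤ ((m:ℤ)+2) - w)
        nlinarith [this]
      · apply mul_nonneg <;> linarith
    nlinarith [h6, h7, h8, h9]
  have hwcases : (w = m + 1 ∧ h = m + 2) ∨ (w = m + 2 ∧ h = m + 1) := by
    rcases mul_eq_zero.mp hqd with h0 | h0
    · have : (w:ℤ) = (m:ℤ) + 1 := by linarith [sub_eq_zero.mp h0]
      have hwval : w = m + 1 := by exact_mod_cast this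
      left; exact ⟨hwval, by omega⟩
    · have : (w:ℤ) = (m:ℤ) + 2 := by linarith [sub_eq_zero.mp h0]
      have hwval : w = m + 2 := by exact_mod_cast this
      right; exact ⟨hwval, by omega⟩
  have hwh_prod : w * h = (m+2) * (m+1) := by
    rcases hwcases with ⟨h1, h2⟩ | ⟨h1, h2⟩ <;> rw [h1, h2] <;> ring
  have hprod : A = occC A ×ˢ occR A := by
    apply Finset.eq_of_subset_of_card_le (subset_occ_prod A)
    rw [Finset.card_product, ← hw, ← hh, hwh_prod, hcard]
  have htc := tcount_eq_two_all A hwK hhL (by omega)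
  have hhpos : 0 < h := by rcases hwcases with ⟨_, h2⟩ | ⟨_, h2⟩ <;> omega
  have hwpos : 0 < w := by rcases hwcases with ⟨h1, _⟩ | ⟨h1, _⟩ <;> omega
  obtain ⟨CC, hCC⟩ : ∃ S, occC A = S := ⟨_, rfl⟩
  obtain ⟨RR, hRR⟩ : ∃ S, occR A = S := ⟨_, rfl⟩
  rw [hCC, hRR] at hprod
  have hmemA : ∀ u : ZMod K × ZMod L, u ∈ A ↔ u.1 ∈ CC ∧ u.2 ∈ RR := by
    intro u
    rw [hprod]
    exact Finset.mem_product
  obtain ⟨y1, hy1⟩ : ∃ y1, y1 ∈ RR := by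
    have : 0 < RR.card := by rw [← hRR, ← hh]; exact hhpos
    exact (Finset.card_pos.mp this).imp (fun _ h => h)
  obtain ⟨x1, hx1⟩ : ∃ x1, x1 ∈ CC := by
    have : 0 < CC.card := by rw [← hCC, ← hw]; exact hwpos
    exact (Finset.card_pos.mp this).imp (fun _ h => h)
  have hrow : rowSet A y1 = CC := by
    ext x
    rw [mem_rowSet, hmemA]
    simp [hy1]
  have hcol : colSet A x1 = RR := by
    ext y
    rw [mem_colSet, hmemA]
    simp [hx1]
  have htcC : tcount CC = 2 := by
    rw [← hrow]
    exact htc.2 y1 (by rw [hRR]; exact hy1)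
  have htcR : tcount RR = 2 := by
    rw [← hcol]
    exact htc.1 x1 (by rw [hCC]; exact hx1)
  obtain ⟨x0, hx0⟩ := eq_arc_of_tcount_eq_two htcC
  obtain ⟨y0, hy0⟩ := eq_arc_of_tcount_eq_two htcR
  have hCCcard : CC.card = w := by rw [← hCC]
  have hRRcard : RR.card = h := by rw [← hRR]
  rw [hCCcard] at hx0
  rw [hRRcard] at hy0
  refine ⟨x0, y0, ?_, ?_, ?_, ?_⟩
  · rcases hwcases with ⟨h1, h2⟩ | ⟨h1, h2⟩
    · left; constructor <;> omega
    · right; constructor <;> omega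
  · rw [hCC]; exact hx0
  · rw [hRR]; exact hy0
  · rw [hprod, ← hx0, ← hy0]

end Rigid
end Aux


namespace Aux
section Helpers
open Finset
set_option linter.unusedSectionVars false
set_option maxHeartbeats 1000000
variable {K L : ℕ} [NeZero K] [NeZero L]

lemma coe_prod_arc (x0 : ZMod K) (y0 : ZMod L) (a b : ℕ) :
    (↑(arc x0 a ×ˢ arc y0 b) : Set (ZMod K × ZMod L)) = rectSet K L x0 y0 a b := by
  ext ⟨x, y⟩
  simp only [Finset.coe_product, Set.mem_prod, Finset.mem_coe, mem_arc, rectSet,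
    Set.mem_setOf_eq, Prod.mk.injEq]
  constructor
  · rintro ⟨⟨i, hi, rfl⟩, ⟨j, hj, rfl⟩⟩
    exact ⟨i, j, hi, hj, rfl, rfl⟩
  · rintro ⟨i, j, hi, hj, hx, hy⟩
    exact ⟨⟨i, hi, hx⟩, ⟨j, hj, hy⟩⟩

lemma barV_one (x : ZMod K) (y : ZMod L) : barV K L x y 1 = {(x, y)} := by
  ext ⟨a, b⟩
  simp only [barV, Set.mem_setOf_eq, Set.mem_singleton_iff, Prod.mk.injEq]
  constructor
  · rintro ⟨j, hj, h1, h2⟩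
    interval_cases j
    · simp only [Nat.cast_zero, add_zero] at h2
      exact ⟨h1, h2⟩
  · rintro ⟨h1, h2⟩
    exact ⟨0, by omega, h1, by simp [h2]⟩

lemma barH_one (x : ZMod K) (y : ZMod L) : barH K L x y 1 = {(x, y)} := by
  ext ⟨a, b⟩
  simp only [barH, Set.mem_setOf_eq, Set.mem_singleton_iff, Prod.mk.injEq]
  constructor
  · rintro ⟨i, hi, h1, h2⟩
    interval_cases i
    · simp only [Nat.cast_zero, add_zero] at h1
      exact ⟨h1, h2⟩
  · rintro ⟨h1, h2⟩
    exact ⟨0, by omega, by simp [h1], h2⟩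

lemma config_eq_onSet (σ : Config K L) (r : Spin) (hσ : ∀ v, σ v = 0 ∨ σ v = r)
    (S : Set (Vtx K L)) (hS : ∀ v, v ∈ S ↔ σ v = 0) : σ = onSet K L S r 0 := by
  funext v
  rw [onSet]
  split_ifs with h
  · exact (hS v).mp h
  · rcases hσ v with h0 | hrr
    · exact absurd ((hS v).mpr h0) h
    · exact hrr

lemma trp_univ : trp (univ : Finset (ZMod K × ZMod L)) = univ := by
  apply Finset.eq_univ_iff_forall.mpr
  rintro ⟨y, x⟩
  exact mem_trp.mpr (Finset.mem_univ _)

end Helpers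
end Aux

set_option maxHeartbeats 4000000 in
theorem gate_property_one (K L : ℕ) [NeZero K] [NeZero L] (C : Couplings)
    (hadm : Admissible K L C)
    (r : Spin) (hr : r = 1 ∨ r = 2) (ω : Path K L)
    (hfromto : ω.FromTo (const K L r) (const K L 0))
    (hspins : ω.OnlySpins 0 r) :
    H K L C (const K L 1) + Γstar C ≤ ω.height C ∧
    (ω.height C = H K L C (const K L 1) + Γstar C →
      ∃ n ≤ ω.len, ω.toFun n ∈ Wcrit K L C r) := by
  classical
  obtain ⟨hγ1, hℓ2, hΓeq, hclb, hcub⟩ := Aux.lstar_facts C hadm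
  have hr0 : r ≠ 0 := by rcases hr with rfl | rfl <;> decide
  obtain ⟨ℓ0, hℓdef⟩ : ∃ n, lstar C = n := ⟨_, rfl⟩
  rw [hℓdef] at hℓ2 hΓeq hclb hcub
  obtain ⟨m, rfl⟩ : ∃ m, ℓ0 = m + 2 := ⟨ℓ0 - 2, by omega⟩
  have hK2 : 2 * (m + 2) ^ 2 ≤ K := by have := hadm.hK; rwa [hℓdef] at this
  have hL2 : 2 * (m + 2) ^ 2 ≤ L := le_trans hK2 hadm.hKL
  set A : ℕ → Finset (Vtx K L) := fun k => Aux.zeroSet (ω.toFun k) with hAdef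
  have hcpos : 0 < C.γ12 + C.γ1 / 2 := by
    have : (1:ℝ) ≤ ((m:ℝ) + 2) - 1 := by
      have : (0:ℝ) ≤ (m:ℝ) := Nat.cast_nonneg m
      linarith
    push_cast at hclb
    nlinarith [hclb, hγ1]
  have hmK : m + 3 < K := by nlinarith
  have hmL : m + 3 < L := by nlinarith
  set N1 : ℕ := (m + 2) * (m + 1) with hN1def
  have hN1K : N1 + 1 < K := by rw [hN1def]; nlinarith
  have hN1KL : N1 + 1 ≤ K * L := by
    have h1 : K ≤ K * L := Nat.le_mul_of_pos_right K (NeZero.pos L)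
    omega
  have hH : ∀ k ≤ ω.len, H K L C (ω.toFun k)
      = H K L C (const K L 1) + (C.γ12 + C.γ1 / 2) * (Aux.perim (A k) : ℝ)
        - 2 * C.γ1 * ((A k).card : ℝ) :=
    fun k hk => Aux.energy_eq C hadm.h2233 hadm.h1213 (ω.toFun k) r hr (hspins k hk)
  have hheight_ub : ∀ k ≤ ω.len, H K L C (ω.toFun k) ≤ ω.height C := by
    intro k hk
    exact Finset.le_sup' (fun n => H K L C (ω.toFun n)) (Finset.mem_range.mpr (by omega))
  have hA0 : (A 0).card = 0 := by
    have he : A 0 = ∅ := by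
      ext v
      simp only [hAdef, Aux.mem_zeroSet, hfromto.1, Finset.notMem_empty, iff_false]
      show ¬ const K L r v = 0
      simpa [const] using hr0
    rw [he, Finset.card_empty]
  have hAuniv : A ω.len = Finset.univ := by
    ext v
    simp only [hAdef, Aux.mem_zeroSet, hfromto.2, Finset.mem_univ, iff_true]
    rfl
  have hAlen : (A ω.len).card = K * L := by
    rw [hAuniv, Finset.card_univ, Fintype.card_prod, ZMod.card, ZMod.card]
  have hstep : ∀ k, k < ω.len → ∃ v, (v ∉ A k ∧ A (k+1) = insert v (A k))
      ∨ (v ∈ A k ∧ A (k+1) = (A k).erase v) := by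
    intro k hk
    obtain ⟨v, hvne, hvo⟩ := ω.step k hk
    refine ⟨v, ?_⟩
    by_cases h0 : ω.toFun k v = 0
    · right
      refine ⟨by simp [hAdef, Aux.mem_zeroSet, h0], ?_⟩
      ext u
      by_cases hu : u = v
      · subst hu
        rw [Finset.mem_erase]
        simp only [hAdef, Aux.mem_zeroSet]
        constructor
        · intro h1; exact absurd (h0.trans h1.symm) hvne
        · rintro ⟨h1, _⟩; simp at h1
      · rw [Finset.mem_erase]
        simp only [hAdef, Aux.mem_zeroSet]
        rw [← hvo u hu]
        simp [hu]
    · left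
      have hkv : ω.toFun k v = r := (hspins k (by omega) v).resolve_left h0
      have h1v : ω.toFun (k+1) v = 0 := by
        rcases hspins (k+1) (by omega) v with h | h
        · exact h
        · exact absurd (hkv.trans h.symm) hvne
      refine ⟨by simp [hAdef, Aux.mem_zeroSet, h0], ?_⟩
      ext u
      by_cases hu : u = v
      · subst hu
        simp [hAdef, Aux.mem_zeroSet, h1v]
      · rw [Finset.mem_insert]
        simp only [hAdef, Aux.mem_zeroSet]
        rw [← hvo u hu]
        simp [hu]
  have hvolstep : ∀ k < ω.len, (A (k+1)).card = (A k).card + 1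
      ∨ (A k).card = (A (k+1)).card + 1 := by
    intro k hk
    obtain ⟨v, hv⟩ := hstep k hk
    rcases hv with ⟨h1, h2⟩ | ⟨h1, h2⟩
    · left; rw [h2, Finset.card_insert_of_notMem h1]
    · right
      rw [h2, Finset.card_erase_of_mem h1]
      have := Finset.card_pos.mpr ⟨v, h1⟩
      omega
  -- part (a)
  have hNlow : ∀ k ≤ ω.len, (A k).card = N1 + 1
      → H K L C (const K L 1) + Γstar C ≤ H K L C (ω.toFun k) := by
    intro k hk hkN
    have hwK : (Aux.occC (A k)).card < K :=
      lt_of_le_of_lt (le_trans (Aux.occC_card_le _) (le_of_eq hkN)) hN1K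
    have hhL : (Aux.occR (A k)).card < L :=
      lt_of_le_of_lt (le_trans (Aux.occR_card_le _) (le_of_eq hkN))
        (lt_of_lt_of_le hN1K hadm.hKL)
    have hperim := Aux.perim_ge (A k) hwK hhL
    have hcle := Aux.card_le_occ_mul (A k)
    have hwh : 2 * m + 4 ≤ (Aux.occC (A k)).card + (Aux.occR (A k)).card := by
      by_contra hcon
      push_neg at hcon
      refine Aux.whge (n := (A k).card) (m := m) ?_ hcle (by omega)
      rw [hkN, hN1def]
    have hp4 : 4 * ((m:ℝ) + 2) ≤ (Aux.perim (A k) : ℝ) := by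
      have h1 : ((2*(2*m+4) : ℕ) : ℝ) ≤ ((Aux.perim (A k) : ℕ) : ℝ) := by
        exact_mod_cast le_trans (by omega : 2*(2*m+4) ≤ 2*((Aux.occC (A k)).card + (Aux.occR (A k)).card)) hperim
      push_cast at h1
      linarith
    have hNR : ((N1 + 1 : ℕ) : ℝ) = ((m:ℝ)+2)^2 - ((m:ℝ)+2) + 1 := by
      rw [hN1def]; push_cast; ring
    rw [hH k hk, hkN, hΓeq, hNR]
    push_cast
    have h2 := mul_le_mul_of_nonneg_left hp4 hcpos.le
    push_cast at h2
    nlinarith [h2]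
  obtain ⟨k0, hk00, hk0len, hk0N⟩ := Aux.ivt (fun k => (A k).card) ω.len hvolstep 0
    (Nat.zero_le _) (N1 + 1) (by simpa using hA0.le.trans (Nat.zero_le _)) (by
      show N1 + 1 ≤ (A ω.len).card
      rw [hAlen]; exact hN1KL)
  have hlowk0 := hNlow k0 hk0len hk0N
  have hubk0 := hheight_ub k0 hk0len
  refine ⟨le_trans hlowk0 hubk0, ?_⟩
  intro heq
  -- every configuration along the path has energy at most Γstar
  have hEk : ∀ k ≤ ω.len, (C.γ12 + C.γ1/2) * (Aux.perim (A k) : ℝ)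
      - 2 * C.γ1 * ((A k).card : ℝ) ≤ Γstar C := by
    intro k hk
    have h1 := hheight_ub k hk
    rw [heq, hH k hk] at h1
    linarith
  -- last visit to volume N1
  have hFs : ∃ k, k ≤ ω.len ∧ (A k).card = N1 := by
    obtain ⟨k, _, h2, h3⟩ := Aux.ivt (fun k => (A k).card) ω.len hvolstep 0
      (Nat.zero_le _) N1 (by simpa using hA0.le.trans (Nat.zero_le _)) (by
        show N1 ≤ (A ω.len).card
        rw [hAlen]; omega)
    exact ⟨k, h2, h3⟩
  set Fs : Finset ℕ := (Finset.range (ω.len + 1)).filter (fun k => (A k).card = N1)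
    with hFsdef
  have hFsne : Fs.Nonempty := by
    obtain ⟨k, hk1, hk2⟩ := hFs
    exact ⟨k, Finset.mem_filter.mpr ⟨Finset.mem_range.mpr (by omega), hk2⟩⟩
  set T := Fs.max' hFsne with hTdef
  have hTmem := Finset.max'_mem Fs hFsne
  have hTle : T ≤ ω.len := by
    have := Finset.mem_range.mp (Finset.mem_filter.mp hTmem).1
    omega
  have hTcard : (A T).card = N1 := (Finset.mem_filter.mp hTmem).2
  have hTmax : ∀ k, T < k → k ≤ ω.len → (A k).card ≠ N1 := by
    intro k h1 h2 h3
    have hm : k ∈ Fs := Finset.mem_filter.mpr ⟨Finset.mem_range.mpr (by omega), h3⟩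
    have := Finset.le_max' Fs k hm
    omega
  have hTlt : T < ω.len := by
    rcases Nat.lt_or_ge T ω.len with h | h
    · exact h
    · exfalso
      have hTeq : T = ω.len := by omega
      rw [hTeq, hAlen] at hTcard
      omega
  have hT1 : (A (T+1)).card = N1 + 1 := by
    rcases hvolstep T hTlt with h | h
    · rw [hTcard] at h; exact h
    · exfalso
      rw [hTcard] at h
      obtain ⟨k', hk1, hk2, hk3⟩ := Aux.ivt (fun k => (A k).card) ω.len hvolstep
        (T+1) (by omega) N1 (by show (A (T+1)).card ≤ N1; omega) (by
          show N1 ≤ (A ω.len).card; rw [hAlen]; omega)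
      exact hTmax k' (by omega) hk2 hk3
  have hgeN : ∀ k, T + 1 ≤ k → k ≤ ω.len → N1 + 1 ≤ (A k).card := by
    intro k h1 h2
    by_contra hcon
    push_neg at hcon
    obtain ⟨k', hk1, hk2, hk3⟩ := Aux.ivt (fun k => (A k).card) ω.len hvolstep
      k h2 N1 (by show (A k).card ≤ N1; omega) (by show N1 ≤ (A ω.len).card; rw [hAlen]; omega)
    exact hTmax k' (by omega) hk2 hk3
  -- structure at time T
  have hTcard' : (A T).card = (m+2) * ((m+2) - 1) := by
    rw [hTcard, hN1def]
    congr 1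
  obtain ⟨x0, y0, hwhcase, harcC, harcR, hprodT⟩ :=
    Aux.rect_structure hK2 hL2 (by omega) hγ1 hcpos hΓeq (A T) hTcard' (hEk T hTle)
  obtain ⟨wT, hwTdef⟩ : ∃ n, (Aux.occC (A T)).card = n := ⟨_, rfl⟩
  obtain ⟨hTT, hhTdef⟩ : ∃ n, (Aux.occR (A T)).card = n := ⟨_, rfl⟩
  rw [hwTdef, hhTdef] at hwhcase hprodT
  rw [hwTdef] at harcC
  rw [hhTdef] at harcR
  have hmemT : ∀ u : Vtx K L, u ∈ A T ↔ u.1 ∈ Aux.arc x0 wT ∧ u.2 ∈ Aux.arc y0 hTT := by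
    intro u
    rw [hprodT]
    exact Finset.mem_product
  have hwT12 : 1 ≤ wT ∧ wT ≤ m + 2 := by rcases hwhcase with ⟨h1, h2⟩ | ⟨h1, h2⟩ <;> omega
  have hTT12 : 1 ≤ hTT ∧ hTT ≤ m + 2 := by rcases hwhcase with ⟨h1, h2⟩ | ⟨h1, h2⟩ <;> omega
  have hwhT : wT + hTT = 2 * m + 3 := by rcases hwhcase with ⟨h1, h2⟩ | ⟨h1, h2⟩ <;> omega
  -- the spin flip at time T is an insertion
  obtain ⟨v, hv⟩ := hstep T hTlt
  have hvins : v ∉ A T ∧ A (T+1) = insert v (A T) := by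
    rcases hv with h | ⟨h1, h2⟩
    · exact h
    · exfalso
      rw [h2, Finset.card_erase_of_mem h1, hTcard] at hT1
      omega
  obtain ⟨hvmem, hins⟩ := hvins
  -- perimeter squeeze at time T+1
  have hoccCT1 : Aux.occC (A (T+1)) = insert v.1 (Aux.occC (A T)) := by
    rw [hins, Aux.occC_insert]
  have hoccRT1 : Aux.occR (A (T+1)) = insert v.2 (Aux.occR (A T)) := by
    rw [hins, Aux.occR_insert]
  have hw'le : (Aux.occC (A (T+1))).card ≤ wT + 1 := by
    rw [hoccCT1]
    exact le_trans (Finset.card_insert_le _ _) (by omega)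
  have hh'le : (Aux.occR (A (T+1))).card ≤ hTT + 1 := by
    rw [hoccRT1]
    exact le_trans (Finset.card_insert_le _ _) (by omega)
  have hw'K : (Aux.occC (A (T+1))).card < K := by omega
  have hh'L : (Aux.occR (A (T+1))).card < L := by omega
  have hp'ub : Aux.perim (A (T+1)) ≤ 4 * (m + 2) := by
    have hE' := hEk (T+1) (by omega)
    rw [hT1, hΓeq] at hE'
    have hNR : ((N1 + 1 : ℕ) : ℝ) = ((m:ℝ)+2)^2 - ((m:ℝ)+2) + 1 := by
      rw [hN1def]; push_cast; ring
    rw [hNR] at hE'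
    have h1 : (C.γ12 + C.γ1/2) * (Aux.perim (A (T+1)) : ℝ)
        ≤ (C.γ12 + C.γ1/2) * (4*((m:ℝ)+2)) := by
      push_cast at hE' ⊢
      linarith [hE']
    have h2 : (Aux.perim (A (T+1)) : ℝ) ≤ 4*((m:ℝ)+2) :=
      le_of_mul_le_mul_left h1 hcpos
    have h3 : (Aux.perim (A (T+1)) : ℝ) ≤ ((4*(m+2) : ℕ) : ℝ) := by push_cast; linarith
    exact_mod_cast h3
  have hp'ge := Aux.perim_ge (A (T+1)) hw'K hh'L
  have hwh'ge : 2*m + 4 ≤ (Aux.occC (A (T+1))).card + (Aux.occR (A (T+1))).card := by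
    by_contra hcon
    push_neg at hcon
    refine Aux.whge (n := (A (T+1)).card) (m := m) ?_ (Aux.card_le_occ_mul (A (T+1))) (by omega)
    rw [hT1, hN1def]
  have hwh'eq : (Aux.occC (A (T+1))).card + (Aux.occR (A (T+1))).card = 2*m + 4 := by
    omega
  have htc' := Aux.tcount_eq_two_all (A (T+1)) hw'K hh'L (by omega)
  have hmemzero : ∀ k, ∀ u : Vtx K L, u ∈ A k ↔ ω.toFun k u = 0 := by
    intro k u
    simp only [hAdef, Aux.mem_zeroSet]
  -- confinement contradictions
  have hconfA : (Aux.occC (A (T+1))).card ≤ (m+2) - 1 →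
      (Aux.occR (A (T+1))).card ≤ (m+2) + 1 → False := by
    intro hs1 hs2
    have hcc := Aux.confinement (ℓ := m+2) hK2 hL2 (by omega) hγ1 hclb hΓeq
      (ω.len - (T+1)) (fun j => A (T+1+j))
      (by
        intro k hk
        obtain ⟨u, hu⟩ := hstep (T+1+k) (by omega)
        refine ⟨u, ?_⟩
        show (u ∉ A (T+1+k) ∧ A (T+1+(k+1)) = insert u (A (T+1+k)))
          ∨ A (T+1+(k+1)) = (A (T+1+k)).erase u
        have hidx : T+1+(k+1) = (T+1+k)+1 := by omega
        rw [hidx]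
        rcases hu with ⟨h1, h2⟩ | ⟨h1, h2⟩
        · exact Or.inl ⟨h1, h2⟩
        · exact Or.inr h2)
      (by
        intro k hk
        exact hEk (T+1+k) (by omega))
      (by
        intro k hk
        have h1 := hgeN (T+1+k) (by omega) (by omega)
        rw [hN1def] at h1
        exact h1)
      hs1 hs2
    have hlast := (hcc (ω.len - (T+1)) (le_refl _)).1
    have hidx2 : T+1+(ω.len - (T+1)) = ω.len := by omega
    simp only [hidx2] at hlast
    rw [hAuniv, Aux.occC_univ, Finset.card_univ, ZMod.card] at hlast
    omega
  have hconfB : (Aux.occR (A (T+1))).card ≤ (m+2) - 1 →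
      (Aux.occC (A (T+1))).card ≤ (m+2) + 1 → False := by
    intro hs1 hs2
    have hcc := Aux.confinement (K := L) (L := K) (ℓ := m+2) hL2 hK2 (by omega) hγ1 hclb hΓeq
      (ω.len - (T+1)) (fun j => Aux.trp (A (T+1+j)))
      (by
        intro k hk
        obtain ⟨u, hu⟩ := hstep (T+1+k) (by omega)
        refine ⟨(u.2, u.1), ?_⟩
        show ((u.2, u.1) ∉ Aux.trp (A (T+1+k)) ∧
            Aux.trp (A (T+1+(k+1))) = insert (u.2, u.1) (Aux.trp (A (T+1+k))))
          ∨ Aux.trp (A (T+1+(k+1))) = (Aux.trp (A (T+1+k))).erase (u.2, u.1)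
        have hidx : T+1+(k+1) = (T+1+k)+1 := by omega
        rw [hidx]
        rcases hu with ⟨h1, h2⟩ | ⟨h1, h2⟩
        · left
          constructor
          · intro hmem
            have := Aux.mem_trp.mp hmem
            simp only [Prod.mk.eta] at this
            exact h1 this
          · rw [h2, Aux.trp_insert]
        · right
          rw [h2, Aux.trp_erase])
      (by
        intro k hk
        rw [Aux.perim_trp, Aux.trp_card]
        exact hEk (T+1+k) (by omega))
      (by
        intro k hk
        rw [Aux.trp_card]
        have h1 := hgeN (T+1+k) (by omega) (by omega)
        rw [hN1def] at h1
        exact h1)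
      (by rw [Aux.occC_trp]; exact hs1)
      (by rw [Aux.occR_trp]; exact hs2)
    have hlast := (hcc (ω.len - (T+1)) (le_refl _)).1
    have hidx2 : T+1+(ω.len - (T+1)) = ω.len := by omega
    simp only [hidx2] at hlast
    rw [hAuniv, Aux.trp_univ, Aux.occC_univ, Finset.card_univ, ZMod.card] at hlast
    omega
  -- case analysis on the location of the added spin
  by_cases hv1 : v.1 ∈ Aux.arc x0 wT
  · -- the new vertex lies in an occupied column
    have hv2 : v.2 ∉ Aux.arc y0 hTT := fun hy => hvmem ((hmemT v).mpr ⟨hv1, hy⟩)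
    have hcolA' : Aux.colSet (A (T+1)) v.1 = insert v.2 (Aux.arc y0 hTT) := by
      ext y
      rw [Aux.mem_colSet, hins, Finset.mem_insert, Finset.mem_insert]
      constructor
      · rintro (h | h)
        · left; exact congrArg Prod.snd h
        · right; exact ((hmemT _).mp h).2
      · rintro (h | h)
        · left; rw [h]
        · right; exact (hmemT _).mpr ⟨hv1, h⟩
    have hv1occ : v.1 ∈ Aux.occC (A (T+1)) := by
      rw [hoccCT1]; exact Finset.mem_insert_self _ _
    have htcv := htc'.1 v.1 hv1occ
    have hcardcol : (Aux.colSet (A (T+1)) v.1).card = hTT + 1 := by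
      rw [hcolA', Finset.card_insert_of_notMem hv2, Aux.card_arc y0 (by omega)]
    obtain ⟨b, hb⟩ := Aux.eq_arc_of_tcount_eq_two htcv
    rw [hcardcol, hcolA'] at hb
    have hv2loc := Aux.arc_extend (by omega) (by omega : hTT + 1 < L) hv2 hb
    rcases hwhcase with ⟨hc1, hc2⟩ | ⟨hc1, hc2⟩
    · -- (ℓ-1) × ℓ rectangle with a protuberance on a horizontal side: confinement
      exfalso
      apply hconfA
      · rw [hoccCT1, Finset.insert_eq_self.mpr (by rw [harcC]; exact hv1), hwTdef]
        omega
      · rw [hoccRT1, Finset.card_insert_of_notMem (by rw [harcR]; exact hv2), hhTdef]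
        omega
    · -- ℓ × (ℓ-1) rectangle with a protuberance on a horizontal side: in Bhat
      obtain ⟨i0, hi0lt, hi0eq⟩ := Aux.mem_arc.mp hv1
      rw [hc1] at hi0lt
      have hsetT : (↑(A T) : Set (Vtx K L)) = rectSet K L x0 y0 (m+2) ((m+2)-1) := by
        rw [← Aux.coe_prod_arc x0 y0 (m+2) ((m+2)-1), hprodT, hc1, hc2]
      have hσeq : ω.toFun (T+1) = onSet K L
          (rectSet K L x0 y0 (m+2) ((m+2)-1) ∪ barH K L (x0 + (i0 : ZMod K)) v.2 1) r 0 := by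
        apply Aux.config_eq_onSet _ _ (hspins (T+1) (by omega))
        intro u
        rw [Set.mem_union]
        have h1 : u ∈ rectSet K L x0 y0 (m+2) ((m+2)-1) ↔ u ∈ A T := by
          rw [← hsetT]; exact Finset.mem_coe
        have h2 : u ∈ barH K L (x0 + (i0:ZMod K)) v.2 1 ↔ u = v := by
          rw [Aux.barH_one]
          have hv' : ((x0 + (i0:ZMod K), v.2) : Vtx K L) = v := by
            rw [← hi0eq]
          rw [hv', Set.mem_singleton_iff]
        rw [h1, h2]
        constructor
        · rintro (h | h)
          · exact (hmemzero _ _).mp (by rw [hins]; exact Finset.mem_insert_of_mem h)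
          · exact (hmemzero _ _).mp (by rw [hins, h]; exact Finset.mem_insert_self _ _)
        · intro h
          have hmem : u ∈ insert v (A T) := by rw [← hins]; exact (hmemzero _ _).mpr h
          rcases Finset.mem_insert.mp hmem with h' | h'
          · right; exact h'
          · left; exact h'
      refine ⟨T+1, by omega, ?_⟩
      have hgoal : ω.toFun (T+1) ∈ Bhat K L (m+2) ((m+2)-1) 1 r 0 := by
        refine ⟨x0, y0, v.2, i0, ?_, by omega, hσeq⟩
        rcases hv2loc with h | h
        · exact Or.inl h
        · right
          rw [h, hc2]
      simp only [Wcrit, hℓdef]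
      exact Set.mem_union_right _ hgoal
  · -- the new vertex opens a new column
    have hv1C : v.1 ∉ Aux.occC (A T) := by rw [harcC]; exact hv1
    have hw'eq : (Aux.occC (A (T+1))).card = wT + 1 := by
      rw [hoccCT1, Finset.card_insert_of_notMem hv1C, hwTdef]
    have hh'eq : (Aux.occR (A (T+1))).card = hTT := by omega
    have hv2mem : v.2 ∈ Aux.arc y0 hTT := by
      by_contra hv2
      have : (Aux.occR (A (T+1))).card = hTT + 1 := by
        rw [hoccRT1, Finset.card_insert_of_notMem (by rw [harcR]; exact hv2), hhTdef]
      omega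
    have hrowA' : Aux.rowSet (A (T+1)) v.2 = insert v.1 (Aux.arc x0 wT) := by
      ext x
      rw [Aux.mem_rowSet, hins, Finset.mem_insert, Finset.mem_insert]
      constructor
      · rintro (h | h)
        · left; exact congrArg Prod.fst h
        · right; exact ((hmemT _).mp h).1
      · rintro (h | h)
        · left; rw [h]
        · right; exact (hmemT _).mpr ⟨h, hv2mem⟩
    have hv2occ : v.2 ∈ Aux.occR (A (T+1)) := by
      rw [hoccRT1]; exact Finset.mem_insert_self _ _
    have htcv := htc'.2 v.2 hv2occ
    have hcardrow : (Aux.rowSet (A (T+1)) v.2).card = wT + 1 := by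
      rw [hrowA', Finset.card_insert_of_notMem hv1, Aux.card_arc x0 (by omega)]
    obtain ⟨b, hb⟩ := Aux.eq_arc_of_tcount_eq_two htcv
    rw [hcardrow, hrowA'] at hb
    have hv1loc := Aux.arc_extend (by omega) (by omega : wT + 1 < K) hv1 hb
    rcases hwhcase with ⟨hc1, hc2⟩ | ⟨hc1, hc2⟩
    · -- (ℓ-1) × ℓ rectangle with a protuberance on a vertical side: in Bconf
      obtain ⟨j0, hj0lt, hj0eq⟩ := Aux.mem_arc.mp hv2mem
      rw [hc2] at hj0lt
      have hsetT : (↑(A T) : Set (Vtx K L)) = rectSet K L x0 y0 ((m+2)-1) (m+2) := by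
        rw [← Aux.coe_prod_arc x0 y0 ((m+2)-1) (m+2), hprodT, hc1, hc2]
      have hσeq : ω.toFun (T+1) = onSet K L
          (rectSet K L x0 y0 ((m+2)-1) (m+2) ∪ barV K L v.1 (y0 + (j0 : ZMod L)) 1) r 0 := by
        apply Aux.config_eq_onSet _ _ (hspins (T+1) (by omega))
        intro u
        rw [Set.mem_union]
        have h1 : u ∈ rectSet K L x0 y0 ((m+2)-1) (m+2) ↔ u ∈ A T := by
          rw [← hsetT]; exact Finset.mem_coe
        have h2 : u ∈ barV K L v.1 (y0 + (j0:ZMod L)) 1 ↔ u = v := by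
          rw [Aux.barV_one]
          have hv' : ((v.1, y0 + (j0:ZMod L)) : Vtx K L) = v := by
            rw [← hj0eq]
          rw [hv', Set.mem_singleton_iff]
        rw [h1, h2]
        constructor
        · rintro (h | h)
          · exact (hmemzero _ _).mp (by rw [hins]; exact Finset.mem_insert_of_mem h)
          · exact (hmemzero _ _).mp (by rw [hins, h]; exact Finset.mem_insert_self _ _)
        · intro h
          have hmem : u ∈ insert v (A T) := by rw [← hins]; exact (hmemzero _ _).mpr h
          rcases Finset.mem_insert.mp hmem with h' | h'
          · right; exact h'
          · left; exact h'
      refine ⟨T+1, by omega, ?_⟩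
      have hgoal : ω.toFun (T+1) ∈ Bconf K L ((m+2)-1) (m+2) 1 r 0 := by
        refine ⟨x0, y0, v.1, j0, ?_, by omega, hσeq⟩
        rcases hv1loc with h | h
        · exact Or.inl h
        · right
          rw [h, hc1]
      simp only [Wcrit, hℓdef]
      exact Set.mem_union_left _ hgoal
    · -- ℓ × (ℓ-1) rectangle with a protuberance on a vertical side: transposed confinement
      exfalso
      apply hconfB
      · rw [hh'eq]; omega
      · rw [hw'eq]; omega

end GenPotts
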